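/- arXiv:2310.07919 — 4 statements merged into one kernel-verified Lean document; each statement's English description precedes it below -/
import Mathlib

section
/- Let t₁ and t₂ be histories on labels Y, let s₁ be a subhistory of t₁ and s₂ a subhistory of t₂ such that s₁ and s₂ are conforming, and let t₁' = t₁ ◁ s₂ and t₂' = t₂ ◁ s₁. Let f be an edge weight function taking values in a weight set W that is clade-ordered. Then g_f(t₁') < g_f(t₁) if and only if g_f(t₂') > g_f(t₂). -/
universe u v

/-- A node of a history sDAG: either the universal ancestor (UA) node `ρ`,
or a node carrying a label `ℓ : Y` and a subpartition `U : Set (Set Y)`. -/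
inductive HNode (Y : Type u) : Type u
  | ua : HNode Y
  | node : Y → Set (Set Y) → HNode Y

namespace HistorySDAGs

variable {Y : Type u}

/-- `U ∈ Part(Y)`: `U` is a set of pairwise disjoint nonempty (finite) clades with `|U| ≠ 1`. -/
def IsPart (U : Set (Set Y)) : Prop :=
  (∀ C ∈ U, C ≠ ∅) ∧
  (∀ C₁ ∈ U, ∀ C₂ ∈ U, C₁ ≠ C₂ → Disjoint C₁ C₂) ∧
  (∀ C, U ≠ {C}) ∧
  U.Finite ∧ ∀ C ∈ U, C.Finite

open Classical in
/-- The clade union of a node. -/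
noncomputable def cladeUnion : HNode Y → Set Y
  | HNode.ua => ∅
  | HNode.node ℓ U => if U = ∅ then {ℓ} else ⋃₀ U

/-- Reachability via directed edges in `E`. -/
def Reach (E : Set (HNode Y × HNode Y)) (a b : HNode Y) : Prop :=
  Relation.ReflTransGen (fun x y => (x, y) ∈ E) a b

/-- `(V, E)` is a history sDAG on labels `Y`. -/
structure IsHSDAG (V : Set (HNode Y)) (E : Set (HNode Y × HNode Y)) : Prop where
  ua_mem : HNode.ua ∈ V
  valid : ∀ ℓ U, HNode.node ℓ U ∈ V → IsPart U
  edge_mem : ∀ e ∈ E, e.1 ∈ V ∧ e.2 ∈ V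
  reach_ua : ∀ v ∈ V, Reach E HNode.ua v
  no_in_ua : ∀ v : HNode Y, (v, HNode.ua) ∉ E
  edge_clade : ∀ ℓ U v, (HNode.node ℓ U, v) ∈ E → cladeUnion v ∈ U
  clade_cov : ∀ ℓ U, HNode.node ℓ U ∈ V → ∀ C ∈ U,
      ∃ v, (HNode.node ℓ U, v) ∈ E ∧ cladeUnion v = C

/-- Every node-clade pair of `V` has exactly one descendant edge in `E`. -/
def UniqueDesc (V : Set (HNode Y)) (E : Set (HNode Y × HNode Y)) : Prop :=
  ∀ ℓ U, HNode.node ℓ U ∈ V → ∀ C ∈ U,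
    ∃! vc, (HNode.node ℓ U, vc) ∈ E ∧ cladeUnion vc = C

/-- `(V, E)` is a history: a history sDAG in which `ρ` has exactly one child and
each node-clade pair has exactly one descendant edge. -/
def IsHistory (V : Set (HNode Y)) (E : Set (HNode Y × HNode Y)) : Prop :=
  IsHSDAG V E ∧ (∃! v, (HNode.ua, v) ∈ E) ∧ UniqueDesc V E

/-- `(Vs, Es)` is a subhistory of `(V, E)` with root node `vr`. -/
structure IsSubhistoryRooted (V : Set (HNode Y)) (E : Set (HNode Y × HNode Y))
    (Vs : Set (HNode Y)) (Es : Set (HNode Y × HNode Y)) (vr : HNode Y) : Prop where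
  subV : Vs ⊆ V
  subE : Es ⊆ E
  ua_not_mem : HNode.ua ∉ Vs
  edge_mem : ∀ e ∈ Es, e.1 ∈ Vs ∧ e.2 ∈ Vs
  root_mem : vr ∈ Vs
  reach_root : ∀ v ∈ Vs, Reach Es vr v
  unique_desc : ∀ ℓ U, HNode.node ℓ U ∈ Vs → ∀ C ∈ U,
      ∃! vc, (HNode.node ℓ U, vc) ∈ Es ∧ cladeUnion vc = C

/-- `(Vs, Es)` is a subhistory of `(V, E)`. -/
def IsSubhistory (V : Set (HNode Y)) (E : Set (HNode Y × HNode Y))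
    (Vs : Set (HNode Y)) (Es : Set (HNode Y × HNode Y)) : Prop :=
  ∃ vr, IsSubhistoryRooted V E Vs Es vr

/-- `(Vt, Et)` is a history in (a trim of) the history sDAG `(V, E)`. -/
def HistoryIn (V : Set (HNode Y)) (E : Set (HNode Y × HNode Y))
    (Vt : Set (HNode Y)) (Et : Set (HNode Y × HNode Y)) : Prop :=
  Vt ⊆ V ∧ Et ⊆ E ∧ IsHistory Vt Et

/-- The set of labels of leaf nodes in a node set. -/
def leafLabels (Vt : Set (HNode Y)) : Set Y := {ℓ | HNode.node ℓ ∅ ∈ Vt}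

/-- A candidate history/graph: a pair of a node set and an edge set. -/
abbrev Hist (Y : Type u) := Set (HNode Y) × Set (HNode Y × HNode Y)

/-- The node set of the history sDAG constructed from the collection `T`. -/
def unionV (T : Set (Hist Y)) : Set (HNode Y) := ⋃ t ∈ T, t.1

/-- The edge set of the history sDAG constructed from the collection `T`. -/
def unionE (T : Set (Hist Y)) : Set (HNode Y × HNode Y) := ⋃ t ∈ T, t.2

/-- The node set of the complete history sDAG on labels `Y`. -/
def completeV (Y : Type u) : Set (HNode Y) :=
  {v | v = HNode.ua ∨ ∃ ℓ U, v = HNode.node ℓ U ∧ IsPart U}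

/-- The edge set of the complete history sDAG on labels `Y`. -/
def completeE (Y : Type u) : Set (HNode Y × HNode Y) :=
  {e | e.1 ∈ completeV Y ∧ e.2 ∈ completeV Y ∧ e.2 ≠ HNode.ua ∧
    (e.1 = HNode.ua ∨ ∃ ℓ U, e.1 = HNode.node ℓ U ∧ cladeUnion e.2 ∈ U)}

variable {W : Type v}

/-- The weight `g_f` of a subgraph with edge set `Es`: the sum of `f` over all edges. -/
noncomputable def gweight [AddCommMonoid W] (f : HNode Y × HNode Y → W)
    (Es : Set (HNode Y × HNode Y)) : W := ∑ᶠ e ∈ Es, f e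

/-- The order is total on the subset `S` of `W`. -/
def TotalOn [PartialOrder W] (S : Set W) : Prop := ∀ a ∈ S, ∀ b ∈ S, a ≤ b ∨ b ≤ a

/-- The order respects addition on the subset `S` of `W`. -/
def RespectsAdd [AddCommMonoid W] [PartialOrder W] (S : Set W) : Prop :=
  ∀ a ∈ S, ∀ b ∈ S, ∀ c : W, a < b ↔ a + c < b + c

/-- Weights of subhistories of `(V, E)` rooted at `v`. -/
def subWeights [AddCommMonoid W] (f : HNode Y × HNode Y → W)
    (V : Set (HNode Y)) (E : Set (HNode Y × HNode Y)) (v : HNode Y) : Set W :=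
  {w | ∃ Vs Es, IsSubhistoryRooted V E Vs Es v ∧ w = gweight f Es}

/-- Weights of augmented subhistories below the node-clade pair `(v, C)`. -/
def augWeights [AddCommMonoid W] (f : HNode Y × HNode Y → W)
    (V : Set (HNode Y)) (E : Set (HNode Y × HNode Y)) (v : HNode Y) (C : Set Y) : Set W :=
  {w | ∃ vc Vs Es, (v, vc) ∈ E ∧ cladeUnion vc = C ∧ IsSubhistoryRooted V E Vs Es vc ∧
    w = gweight f (insert (v, vc) Es)}

/-- Weights of histories in `(V, E)`. -/
def historyWeights [AddCommMonoid W] (f : HNode Y × HNode Y → W)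
    (V : Set (HNode Y)) (E : Set (HNode Y × HNode Y)) : Set W :=
  {w | ∃ Vt Et, HistoryIn V E Vt Et ∧ w = gweight f Et}

/-- `W` is clade-ordered with respect to `f` and `(V, E)`. -/
def CladeOrdered [AddCommMonoid W] [PartialOrder W] (f : HNode Y × HNode Y → W)
    (V : Set (HNode Y)) (E : Set (HNode Y × HNode Y)) : Prop :=
  (∀ v ∈ V, v ≠ HNode.ua →
      TotalOn (subWeights f V E v) ∧ RespectsAdd (subWeights f V E v)) ∧
  (∀ ℓ U, HNode.node ℓ U ∈ V → ∀ C ∈ U,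
      TotalOn (augWeights f V E (HNode.node ℓ U) C) ∧
      RespectsAdd (augWeights f V E (HNode.node ℓ U) C)) ∧
  TotalOn (historyWeights f V E)

/-- The minimum-weight histories in `(V, E)` with respect to `g_f`. -/
def minHistories [AddCommMonoid W] [PartialOrder W] (f : HNode Y × HNode Y → W)
    (V : Set (HNode Y)) (E : Set (HNode Y × HNode Y)) : Set (Hist Y) :=
  {t | HistoryIn V E t.1 t.2 ∧
    ∀ t' : Hist Y, HistoryIn V E t'.1 t'.2 → gweight f t.2 ≤ gweight f t'.2}

open Classical in
/-- The map `q` collapsing the edge `(vp, vc)`, sending both `vp` and `vc` to `vp'`. -/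
noncomputable def collapseMap (vp vc vp' : HNode Y) (v : HNode Y) : HNode Y :=
  if v = vp ∨ v = vc then vp' else v

/-- The history obtained by collapsing the edge `(vp, vc)` (into `vp'`) in `t`. -/
noncomputable def collapseEdgeHist (vp vc vp' : HNode Y) (t : Hist Y) : Hist Y :=
  (collapseMap vp vc vp' '' t.1,
   (fun e : HNode Y × HNode Y => (collapseMap vp vc vp' e.1, collapseMap vp vc vp' e.2)) ''
     (t.2 \ {(vp, vc)}))

/-- The new parent node `(ℓ_p, (U_p ∪ U_c) \ {CU(v_c)})` formed when collapsing an edge. -/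
noncomputable def newParent : HNode Y → HNode Y → HNode Y
  | HNode.node ℓp Up, HNode.node ℓc Uc =>
      HNode.node ℓp ((Up ∪ Uc) \ {cladeUnion (HNode.node ℓc Uc)})
  | v, _ => v

/-- `t'` results from `t` by collapsing one label-collapsible edge. -/
def LabelCollapseStep (t t' : Hist Y) : Prop :=
  ∃ ℓ Up Uc, (HNode.node ℓ Up, HNode.node ℓ Uc) ∈ t.2 ∧ Uc ≠ ∅ ∧
    t' = collapseEdgeHist (HNode.node ℓ Up) (HNode.node ℓ Uc)
        (newParent (HNode.node ℓ Up) (HNode.node ℓ Uc)) t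

/-- `t` is label-collapsed: it has no label-collapsible edge. -/
def LabelCollapsed (t : Hist Y) : Prop :=
  ∀ ℓ Up Uc, (HNode.node ℓ Up, HNode.node ℓ Uc) ∈ t.2 → Uc = ∅

/-- `(vp, vc)` is a label-collapsible edge of `G`. -/
def LabelCollapsibleEdge (G : Hist Y) (vp vc : HNode Y) : Prop :=
  (vp, vc) ∈ G.2 ∧ ∃ ℓ Up Uc, vp = HNode.node ℓ Up ∧ vc = HNode.node ℓ Uc ∧ Uc ≠ ∅

/-- `T` is a label-collapsible edge cover of `G`. -/
def LabelCollapsibleEdgeCover (G : Hist Y) (T : Set (Hist Y)) : Prop :=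
  (∀ t ∈ T, HistoryIn G.1 G.2 t.1 t.2) ∧
  (∀ e ∈ G.2, ∃ t ∈ T, e ∈ t.2) ∧
  (∀ vp vc, LabelCollapsibleEdge G vp vc →
    ∀ Vs Es, IsSubhistory G.1 G.2 Vs Es → (vp, vc) ∈ Es →
      ∃ t ∈ T, Vs ⊆ t.1 ∧ Es ⊆ t.2)

open Classical in
/-- Collapsing the edge `(vp, vc)` in the history sDAG `G`, via `E⁺`, `R`, `E⁻`, `E'`, `V'`. -/
noncomputable def collapseDAGEdge (vp vc : HNode Y) (G : Hist Y) : Hist Y :=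
  let vp' := newParent vp vc
  let Eplus : Set (HNode Y × HNode Y) :=
    (G.2 ∪ {e | ∃ v, e = (v, vp') ∧ (v, vp) ∈ G.2}
        ∪ {e | ∃ v, e = (vp', v) ∧ (vp, v) ∈ G.2 ∧ cladeUnion v ≠ cladeUnion vc}
        ∪ {e | ∃ v, e = (vp', v) ∧ (vc, v) ∈ G.2}) \ {(vp, vc)}
  let R : Set (HNode Y × HNode Y) :=
    if ∃ v, (vp, v) ∈ Eplus ∧ cladeUnion v = cladeUnion vc then ∅
    else {e ∈ Eplus | e.2 = vp}
  let Eminus := Eplus \ R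
  let E' := {e ∈ Eminus | Reach Eminus HNode.ua e.1}
  ({v | ∃ e ∈ E', v = e.1 ∨ v = e.2}, E')

/-- `t'` is obtained from `t` by a subhistory swap, replacing a subhistory of `t` by a
conforming subhistory of some history in `S`. -/
def SwapStepUsing (S : Set (Hist Y)) (t t' : Hist Y) : Prop :=
  ∃ t₂ ∈ S, ∃ Vs' Es' vr' vp,
    IsSubhistoryRooted t₂.1 t₂.2 Vs' Es' vr' ∧ (vp, vr') ∈ t₂.2 ∧
    ∃ Vs Es vr, IsSubhistoryRooted t.1 t.2 Vs Es vr ∧ (vp, vr) ∈ t.2 ∧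
      leafLabels Vs = leafLabels Vs' ∧
      t' = ((t.1 \ Vs) ∪ Vs', (t.2 \ (Es ∪ {(vp, vr)})) ∪ (Es' ∪ {(vp, vr')}))

/-- Leaves of an abstract rooted graph. -/
def IsLeafIn {α : Type v} (nodes : Set α) (edges : Set (α × α)) (x : α) : Prop :=
  x ∈ nodes ∧ ∀ c, (x, c) ∉ edges

/-- Reachability via directed edges in an abstract graph. -/
def GReach {α : Type v} (edges : Set (α × α)) (a b : α) : Prop :=
  Relation.ReflTransGen (fun x y => (x, y) ∈ edges) a b

/-- An (internally) labeled tree: a rooted multifurcating tree with no unifurcations,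
with node labels in `Y` that are injective on leaves. -/
structure IsLabeledTree {α : Type v} (nodes : Set α) (edges : Set (α × α))
    (root : α) (lab : α → Y) : Prop where
  root_mem : root ∈ nodes
  edge_mem : ∀ e ∈ edges, e.1 ∈ nodes ∧ e.2 ∈ nodes
  reach_root : ∀ x ∈ nodes, GReach edges root x
  unique_parent : ∀ x a b, (a, x) ∈ edges → (b, x) ∈ edges → a = b
  no_parent_root : ∀ a, (a, root) ∉ edges
  acyclic : ∀ x, ¬ Relation.TransGen (fun a b => (a, b) ∈ edges) x x
  no_unif : ∀ x ∈ nodes, ¬ (∃! c, (x, c) ∈ edges)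
  leaf_inj : ∀ x y, IsLeafIn nodes edges x → IsLeafIn nodes edges y → lab x = lab y → x = y
  finite : nodes.Finite

/-- The set `C_w` of leaf labels below a node `w` of an abstract labeled tree. -/
def leavesBelow {α : Type v} (nodes : Set α) (edges : Set (α × α)) (lab : α → Y) (w : α) :
    Set Y :=
  {y | ∃ u, IsLeafIn nodes edges u ∧ GReach edges w u ∧ y = lab u}

/-- The history sDAG node `v_w` associated to a node `w` of a labeled tree. -/
def treeNodeOf {α : Type v} (nodes : Set α) (edges : Set (α × α)) (lab : α → Y) (w : α) :
    HNode Y :=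
  HNode.node (lab w) {C | ∃ w', (w, w') ∈ edges ∧ C = leavesBelow nodes edges lab w'}

/-- The node set `V_t` of the history associated to a labeled tree. -/
def treeToHistV {α : Type v} (nodes : Set α) (edges : Set (α × α)) (lab : α → Y) :
    Set (HNode Y) :=
  insert HNode.ua (treeNodeOf nodes edges lab '' nodes)

/-- The edge set `E_t` of the history associated to a labeled tree. -/
def treeToHistE {α : Type v} (nodes : Set α) (edges : Set (α × α)) (root : α) (lab : α → Y) :
    Set (HNode Y × HNode Y) :=
  insert (HNode.ua, treeNodeOf nodes edges lab root)
    {e | ∃ w₁ w₂, (w₁, w₂) ∈ edges ∧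
      e = (treeNodeOf nodes edges lab w₁, treeNodeOf nodes edges lab w₂)}


section Aux

variable {V : Set (HNode Y)} {E : Set (HNode Y × HNode Y)}

instance : Inhabited (HNode Y) := ⟨HNode.ua⟩

lemma cu_sub_of_edge (h : IsHSDAG V E) {ℓ : Y} {U : Set (Set Y)} {w : HNode Y}
    (he : (HNode.node ℓ U, w) ∈ E) : cladeUnion w ⊆ cladeUnion (HNode.node ℓ U) := by
  have hU := h.edge_clade ℓ U w he
  have hne : U ≠ ∅ := fun h0 => by simp [h0] at hU
  simp only [cladeUnion, if_neg hne]
  exact Set.subset_sUnion_of_mem hU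

lemma ne_ua_of_edge (h : IsHSDAG V E) {a b : HNode Y} (he : (a, b) ∈ E) : b ≠ HNode.ua :=
  fun hb => h.no_in_ua a (hb ▸ he)

lemma reach_mono (h : IsHSDAG V E) {a b : HNode Y} (hr : Reach E a b)
    (ha : a ≠ HNode.ua) : cladeUnion b ⊆ cladeUnion a ∧ b ≠ HNode.ua := by
  induction hr with
  | refl => exact ⟨subset_rfl, ha⟩
  | @tail b c hab hbc ih =>
    obtain ⟨hsub, hbne⟩ := ih
    cases b with
    | ua => exact absurd rfl hbne
    | node ℓ U => exact ⟨(cu_sub_of_edge h hbc).trans hsub, ne_ua_of_edge h hbc⟩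

lemma eq_child_of_cu (h : IsHistory V E) {ℓ : Y} {U : Set (Set Y)}
    (hv : HNode.node ℓ U ∈ V) {w w' : HNode Y}
    (hw : (HNode.node ℓ U, w) ∈ E) (hw' : (HNode.node ℓ U, w') ∈ E)
    (hcu : cladeUnion w = cladeUnion w') : w = w' := by
  obtain ⟨vc, -, huniq⟩ := h.2.2 ℓ U hv (cladeUnion w') (h.1.edge_clade ℓ U w' hw')
  rw [huniq w ⟨hw, hcu⟩]
  exact (huniq w' ⟨hw', rfl⟩).symm

lemma subhistory_nodes (h : IsHistory V E) {Vs Es vr} (hs : IsSubhistoryRooted V E Vs Es vr) :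
    Vs = {u | Reach E vr u} := by
  ext u
  simp only [Set.mem_setOf_eq]
  constructor
  · intro hu
    exact Relation.ReflTransGen.mono (fun x y hxy => hs.subE hxy) _ _ (hs.reach_root u hu)
  · intro hu
    induction hu with
    | refl => exact hs.root_mem
    | @tail b c hab hbc ih =>
      have hbs : b ∈ Vs := ih
      have hbne : b ≠ HNode.ua := fun h0 => hs.ua_not_mem (h0 ▸ hbs)
      cases b with
      | ua => exact absurd rfl hbne
      | node ℓ U =>
        obtain ⟨wcc, ⟨hwE, hwCU⟩, -⟩ :=
          hs.unique_desc ℓ U hbs (cladeUnion c) (h.1.edge_clade ℓ U c hbc)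
        have : wcc = c := eq_child_of_cu h (hs.subV hbs) (hs.subE hwE) hbc hwCU
        exact this ▸ (hs.edge_mem _ hwE).2

lemma subhistory_edges (h : IsHistory V E) {Vs Es vr} (hs : IsSubhistoryRooted V E Vs Es vr) :
    ∀ e ∈ E, e.1 ∈ Vs → e ∈ Es := by
  rintro ⟨a, b⟩ he ha
  have hane : a ≠ HNode.ua := fun h0 => hs.ua_not_mem (h0 ▸ ha)
  cases a with
  | ua => exact absurd rfl hane
  | node ℓ U =>
    obtain ⟨wcc, ⟨hwE, hwCU⟩, -⟩ :=
      hs.unique_desc ℓ U ha (cladeUnion b) (h.1.edge_clade ℓ U b he)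
    have : wcc = b := eq_child_of_cu h (hs.subV ha) (hs.subE hwE) he hwCU
    exact this ▸ hwE

lemma laminar (h : IsHistory V E) {a u : HNode Y} (hu : Reach E a u) :
    ∀ x, Reach E a x → (cladeUnion u ∩ cladeUnion x).Nonempty →
      Reach E u x ∨ Reach E x u := by
  induction hu using Relation.ReflTransGen.head_induction_on with
  | refl => exact fun x hx _ => Or.inl hx
  | @head a c hac hcu ih =>
    intro x hx hov
    rcases Relation.ReflTransGen.cases_head hx with rfl | ⟨c', hac', hc'x⟩
    · exact Or.inr (Relation.ReflTransGen.head hac hcu)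
    · cases a with
      | ua =>
        obtain ⟨r, -, hun⟩ := h.2.1
        have hcc : c' = c := by rw [hun c' hac', hun c hac]
        exact ih x (hcc ▸ hc'x) hov
      | node ℓ U =>
        have hCc := h.1.edge_clade ℓ U c hac
        have hCc' := h.1.edge_clade ℓ U c' hac'
        by_cases hcc : cladeUnion c = cladeUnion c'
        · have : c' = c := eq_child_of_cu h (h.1.edge_mem _ hac).1 hac' hac hcc.symm
          exact ih x (this ▸ hc'x) hov
        · exfalso
          have hdisj := (h.1.valid ℓ U (h.1.edge_mem _ hac).1).2.1 _ hCc _ hCc' hcc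
          have hsubu := (reach_mono h.1 hcu (ne_ua_of_edge h.1 hac)).1
          have hsubx := (reach_mono h.1 hc'x (ne_ua_of_edge h.1 hac')).1
          obtain ⟨y, hy1, hy2⟩ := hov
          exact Set.disjoint_left.mp hdisj (hsubu hy1) (hsubx hy2)

lemma eq_of_reach_cu (h : IsHistory V E) {u x : HNode Y} (huV : u ∈ V) (hune : u ≠ HNode.ua)
    (hr : Reach E u x) (hc : cladeUnion u ⊆ cladeUnion x) : x = u := by
  rcases Relation.ReflTransGen.cases_head hr with rfl | ⟨w, hw, hwx⟩
  · rfl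
  · exfalso
    cases u with
    | ua => exact hune rfl
    | node ℓ U =>
      have hpart := h.1.valid ℓ U huV
      have hCw := h.1.edge_clade ℓ U w hw
      have hex : ∃ C' ∈ U, C' ≠ cladeUnion w := by
        by_contra hno
        push_neg at hno
        exact hpart.2.2.1 (cladeUnion w) (Set.eq_singleton_iff_unique_mem.mpr ⟨hCw, hno⟩)
      obtain ⟨C', hC', hCne⟩ := hex
      obtain ⟨y, hy⟩ := Set.nonempty_iff_ne_empty.mpr (hpart.1 C' hC')
      have hUne : U ≠ ∅ := fun h0 => by simp [h0] at hC'
      have hyu : y ∈ cladeUnion (HNode.node ℓ U) := by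
        simp only [cladeUnion, if_neg hUne]
        exact ⟨C', hC', hy⟩
      have hynw : y ∉ cladeUnion w :=
        Set.disjoint_left.mp (hpart.2.1 C' hC' _ hCw hCne) hy
      have hxw := (reach_mono h.1 hwx (ne_ua_of_edge h.1 hw)).1
      exact hynw (hxw (hc hyu))

lemma desc_strong (h : IsHistory V E) :
    ∀ n : ℕ, ∀ v ∈ V, v ≠ HNode.ua → (cladeUnion v).ncard = n →
      {u | Reach E v u}.Finite ∧ leafLabels {u | Reach E v u} = cladeUnion v := by
  intro n
  induction n using Nat.strong_induction_on with
  | _ n ih =>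
    intro v hv hvne hcard
    cases v with
    | ua => exact absurd rfl hvne
    | node ℓ U =>
      have hpart := h.1.valid ℓ U hv
      by_cases hU : U = ∅
      · subst hU
        have hset : {u | Reach E (HNode.node ℓ (∅ : Set (Set Y))) u} = {HNode.node ℓ ∅} := by
          ext u
          simp only [Set.mem_setOf_eq, Set.mem_singleton_iff]
          constructor
          · intro hr
            rcases Relation.ReflTransGen.cases_head hr with rfl | ⟨w, hw, -⟩
            · rfl
            · exact absurd (h.1.edge_clade _ _ _ hw) (Set.notMem_empty _)
          · rintro rfl
            exact Relation.ReflTransGen.refl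
        rw [hset]
        refine ⟨Set.finite_singleton _, ?_⟩
        ext y
        simp [leafLabels, cladeUnion, eq_comm]
      · have hchoose : ∀ C, C ∈ U → ∃ vc, (HNode.node ℓ U, vc) ∈ E ∧ cladeUnion vc = C :=
          fun C hC => (h.2.2 ℓ U hv C hC).exists
        choose! wc hwcE hwcCU using hchoose
        have hUfin := hpart.2.2.2.1
        have hCUfin : (⋃₀ U).Finite := Set.Finite.sUnion hUfin hpart.2.2.2.2
        have hcuv : cladeUnion (HNode.node ℓ U) = ⋃₀ U := by simp [cladeUnion, hU]
        have hchild : ∀ C ∈ U, wc C ∈ V ∧ wc C ≠ HNode.ua ∧ (cladeUnion (wc C)).ncard < n := by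
          intro C hC
          refine ⟨(h.1.edge_mem _ (hwcE C hC)).2, ne_ua_of_edge h.1 (hwcE C hC), ?_⟩
          rw [hwcCU C hC, ← hcard, hcuv]
          have hCsub : C ⊆ ⋃₀ U := Set.subset_sUnion_of_mem hC
          have hex : ∃ C' ∈ U, C' ≠ C := by
            by_contra hno
            push_neg at hno
            exact hpart.2.2.1 C (Set.eq_singleton_iff_unique_mem.mpr ⟨hC, hno⟩)
          obtain ⟨C', hC', hne⟩ := hex
          obtain ⟨y, hy⟩ := Set.nonempty_iff_ne_empty.mpr (hpart.1 C' hC')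
          exact Set.ncard_lt_ncard ⟨hCsub, fun hsub =>
            Set.disjoint_left.mp (hpart.2.1 C' hC' C hC hne) hy (hsub ⟨C', hC', hy⟩)⟩ hCUfin
        have hkey : {u | Reach E (HNode.node ℓ U) u}
            = insert (HNode.node ℓ U) (⋃ C ∈ U, {u | Reach E (wc C) u}) := by
          ext u
          simp only [Set.mem_setOf_eq, Set.mem_insert_iff, Set.mem_iUnion, exists_prop]
          constructor
          · intro hr
            rcases Relation.ReflTransGen.cases_head hr with rfl | ⟨w, hw, hwu⟩
            · exact Or.inl rfl
            · have hCw := h.1.edge_clade ℓ U w hw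
              have hwe : w = wc (cladeUnion w) :=
                eq_child_of_cu h hv hw (hwcE _ hCw) (hwcCU _ hCw).symm
              exact Or.inr ⟨cladeUnion w, hCw, hwe ▸ hwu⟩
          · rintro (rfl | ⟨C, hC, hr⟩)
            · exact Relation.ReflTransGen.refl
            · exact Relation.ReflTransGen.head (hwcE C hC) hr
        rw [hkey]
        have hdesc : ∀ C ∈ U, {u | Reach E (wc C) u}.Finite ∧
            leafLabels {u | Reach E (wc C) u} = cladeUnion (wc C) := by
          intro C hC
          obtain ⟨h1, h2, h3⟩ := hchild C hC
          exact ih _ h3 (wc C) h1 h2 rfl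
        constructor
        · exact Set.Finite.insert _ (Set.Finite.biUnion hUfin fun C hC => (hdesc C hC).1)
        · ext y
          simp only [leafLabels, Set.mem_setOf_eq, Set.mem_insert_iff, Set.mem_iUnion,
            exists_prop, hcuv, Set.mem_sUnion]
          constructor
          · rintro (heq | ⟨C, hC, hr⟩)
            · injection heq with h1 h2
              exact absurd h2.symm hU
            · refine ⟨C, hC, ?_⟩
              have hl := (hdesc C hC).2
              rw [hwcCU C hC] at hl
              rw [← hl]
              exact hr
          · rintro ⟨C, hC, hy⟩
            refine Or.inr ⟨C, hC, ?_⟩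
            have hl := (hdesc C hC).2
            rw [hwcCU C hC] at hl
            rw [← hl] at hy
            exact hy

lemma history_V_finite (h : IsHistory V E) : V.Finite := by
  obtain ⟨r, hr, hun⟩ := h.2.1
  have hrV : r ∈ V := (h.1.edge_mem _ hr).2
  have hrne : r ≠ HNode.ua := ne_ua_of_edge h.1 hr
  have hfin := (desc_strong h _ r hrV hrne rfl).1
  refine Set.Finite.subset (hfin.insert HNode.ua) ?_
  intro v hv
  rcases Relation.ReflTransGen.cases_head (h.1.reach_ua v hv) with rfl | ⟨w, hw, hwv⟩
  · exact Set.mem_insert _ _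
  · exact Set.mem_insert_of_mem _ (hun w hw ▸ hwv)

lemma history_E_finite (h : IsHistory V E) : E.Finite :=
  Set.Finite.subset ((history_V_finite h).prod (history_V_finite h))
    fun e he => Set.mem_prod.mpr ⟨(h.1.edge_mem e he).1, (h.1.edge_mem e he).2⟩

lemma history_sub_completeV (h : IsHistory V E) : V ⊆ completeV Y := by
  intro v hv
  cases v with
  | ua => exact Or.inl rfl
  | node ℓ U => exact Or.inr ⟨ℓ, U, rfl, h.1.valid ℓ U hv⟩

lemma history_sub_completeE (h : IsHistory V E) : E ⊆ completeE Y := by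
  rintro ⟨a, b⟩ he
  refine ⟨history_sub_completeV h (h.1.edge_mem _ he).1,
    history_sub_completeV h (h.1.edge_mem _ he).2, ne_ua_of_edge h.1 he, ?_⟩
  cases a with
  | ua => exact Or.inl rfl
  | node ℓ U => exact Or.inr ⟨ℓ, U, rfl, h.1.edge_clade ℓ U b he⟩

lemma sub_root_all (h : IsHistory V E) {Vs Es vr} (hs : IsSubhistoryRooted V E Vs Es vr)
    (hp : (HNode.ua, vr) ∈ E) : Es ∪ {(HNode.ua, vr)} = E := by
  apply Set.Subset.antisymm
  · exact Set.union_subset hs.subE (Set.singleton_subset_iff.mpr hp)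
  · rintro ⟨a, b⟩ he
    obtain ⟨r, hr, hun⟩ := h.2.1
    by_cases ha : a = HNode.ua
    · subst ha
      have hbv : b = vr := by rw [hun b he, hun vr hp]
      exact Set.mem_union_right _ (by simp [hbv])
    · left
      apply subhistory_edges h hs _ he
      have haV : a ∈ V := (h.1.edge_mem _ he).1
      rcases Relation.ReflTransGen.cases_head (h.1.reach_ua a haV) with heq | ⟨w, hw, hwa⟩
      · exact absurd heq.symm ha
      · have hwr : w = vr := by rw [hun w hw, hun vr hp]
        show a ∈ Vs
        rw [subhistory_nodes h hs]
        exact hwr ▸ hwa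

lemma swap_disjoint {Vt₁ Vt₂ : Set (HNode Y)} {Et₁ Et₂ : Set (HNode Y × HNode Y)}
    (h₁ : IsHistory Vt₁ Et₁) (h₂ : IsHistory Vt₂ Et₂)
    {Vs₁ Es₁ : _} {vr₁ : HNode Y} (hs₁ : IsSubhistoryRooted Vt₁ Et₁ Vs₁ Es₁ vr₁)
    {Vs₂ Es₂ : _} {vr₂ : HNode Y} (hs₂ : IsSubhistoryRooted Vt₂ Et₂ Vs₂ Es₂ vr₂)
    {vp : HNode Y} (hp₁ : (vp, vr₁) ∈ Et₁) (hvp : vp ≠ HNode.ua)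
    (hcu : cladeUnion vr₂ = cladeUnion vr₁) :
    Disjoint (Et₁ \ (Es₁ ∪ {(vp, vr₁)})) (Es₂ ∪ {(vp, vr₂)}) := by
  rw [Set.disjoint_left]
  rintro ⟨a, b⟩ ⟨heE, heX⟩ he2
  apply heX
  rcases he2 with he2 | he2
  · -- the edge lies in Es₂
    left
    apply subhistory_edges h₁ hs₁ _ heE
    show a ∈ Vs₁
    have h1s2 : a ∈ Vs₂ := (hs₂.edge_mem _ he2).1
    have hreach2 : Reach Et₂ vr₂ a := by
      rw [subhistory_nodes h₂ hs₂] at h1s2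
      exact h1s2
    have hane : a ≠ HNode.ua := fun h0 => hs₂.ua_not_mem (h0 ▸ h1s2)
    have hvr₂ne : vr₂ ≠ HNode.ua := fun h0 => hs₂.ua_not_mem (h0 ▸ hs₂.root_mem)
    have hsub : cladeUnion a ⊆ cladeUnion vr₁ := by
      rw [← hcu]
      exact (reach_mono h₂.1 hreach2 hvr₂ne).1
    have haV₂ : a ∈ Vt₂ := hs₂.subV h1s2
    -- cladeUnion a is nonempty
    have hnon : (cladeUnion a).Nonempty := by
      cases a with
      | ua => exact absurd rfl hane
      | node ℓ U =>
        have hCb := h₂.1.edge_clade ℓ U b (hs₂.subE he2)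
        have hpart := h₂.1.valid ℓ U haV₂
        obtain ⟨y, hy⟩ := Set.nonempty_iff_ne_empty.mpr (hpart.1 _ hCb)
        have hUne : U ≠ ∅ := fun h0 => by simp [h0] at hCb
        simp only [cladeUnion, if_neg hUne]
        exact ⟨y, cladeUnion b, hCb, hy⟩
    have haV₁ : a ∈ Vt₁ := (h₁.1.edge_mem _ heE).1
    have hvr₁V : vr₁ ∈ Vt₁ := (h₁.1.edge_mem _ hp₁).2
    obtain ⟨y, hy⟩ := hnon
    rcases laminar h₁ (h₁.1.reach_ua a haV₁) vr₁ (h₁.1.reach_ua vr₁ hvr₁V)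
        ⟨y, hy, hsub hy⟩ with hr | hr
    · have : vr₁ = a := eq_of_reach_cu h₁ haV₁ hane hr hsub
      rw [subhistory_nodes h₁ hs₁]
      exact this ▸ Relation.ReflTransGen.refl
    · rw [subhistory_nodes h₁ hs₁]
      exact hr
  · -- the edge is (vp, vr₂)
    right
    have heq : (a, b) = (vp, vr₂) := he2
    cases vp with
    | ua => exact absurd rfl hvp
    | node ℓp Up =>
      have h2 : (HNode.node ℓp Up, vr₂) ∈ Et₁ := heq ▸ heE
      have hvv : vr₂ = vr₁ :=
        eq_child_of_cu h₁ (h₁.1.edge_mem _ hp₁).1 h2 hp₁ hcu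
      simp [heq, hvv]

end Aux

/-- Lemma `updownlittle`: swapping conforming subhistories between two
histories decreases the weight of one iff it increases the weight of the other. -/
theorem swap_updown {W : Type v} [AddCommMonoid W] [PartialOrder W]
    (f : HNode Y × HNode Y → W)
    (hco : CladeOrdered f (completeV Y) (completeE Y))
    (Vt₁ Vt₂ : Set (HNode Y)) (Et₁ Et₂ : Set (HNode Y × HNode Y))
    (h₁ : IsHistory Vt₁ Et₁) (h₂ : IsHistory Vt₂ Et₂)
    (Vs₁ Es₁ : _) (vr₁ : HNode Y) (hs₁ : IsSubhistoryRooted Vt₁ Et₁ Vs₁ Es₁ vr₁)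
    (Vs₂ Es₂ : _) (vr₂ : HNode Y) (hs₂ : IsSubhistoryRooted Vt₂ Et₂ Vs₂ Es₂ vr₂)
    (vp : HNode Y) (hp₁ : (vp, vr₁) ∈ Et₁) (hp₂ : (vp, vr₂) ∈ Et₂)
    (hconf : leafLabels Vs₁ = leafLabels Vs₂) :
    (gweight f ((Et₁ \ (Es₁ ∪ {(vp, vr₁)})) ∪ (Es₂ ∪ {(vp, vr₂)})) < gweight f Et₁ ↔
      gweight f Et₂ < gweight f ((Et₂ \ (Es₂ ∪ {(vp, vr₂)})) ∪ (Es₁ ∪ {(vp, vr₁)}))) := by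
  by_cases hvp : vp = HNode.ua
  · subst hvp
    rw [sub_root_all h₁ hs₁ hp₁, sub_root_all h₂ hs₂ hp₂]
    simp
  · -- clade unions of the two roots agree
    have hvr₁ne : vr₁ ≠ HNode.ua := fun h0 => hs₁.ua_not_mem (h0 ▸ hs₁.root_mem)
    have hvr₂ne : vr₂ ≠ HNode.ua := fun h0 => hs₂.ua_not_mem (h0 ▸ hs₂.root_mem)
    have hl₁ : leafLabels Vs₁ = cladeUnion vr₁ := by
      rw [subhistory_nodes h₁ hs₁]
      exact (desc_strong h₁ _ vr₁ (hs₁.subV hs₁.root_mem) hvr₁ne rfl).2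
    have hl₂ : leafLabels Vs₂ = cladeUnion vr₂ := by
      rw [subhistory_nodes h₂ hs₂]
      exact (desc_strong h₂ _ vr₂ (hs₂.subV hs₂.root_mem) hvr₂ne rfl).2
    have hcu : cladeUnion vr₂ = cladeUnion vr₁ := by rw [← hl₁, ← hl₂, hconf]
    have hd₁ : Disjoint (Et₁ \ (Es₁ ∪ {(vp, vr₁)})) (Es₂ ∪ {(vp, vr₂)}) :=
      swap_disjoint h₁ h₂ hs₁ hs₂ hp₁ hvp hcu
    have hd₂ : Disjoint (Et₂ \ (Es₂ ∪ {(vp, vr₂)})) (Es₁ ∪ {(vp, vr₁)}) :=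
      swap_disjoint h₂ h₁ hs₂ hs₁ hp₂ hvp hcu.symm
    have hfin₁ := history_E_finite h₁
    have hfin₂ := history_E_finite h₂
    have hX₁sub : Es₁ ∪ {(vp, vr₁)} ⊆ Et₁ :=
      Set.union_subset hs₁.subE (Set.singleton_subset_iff.mpr hp₁)
    have hX₂sub : Es₂ ∪ {(vp, vr₂)} ⊆ Et₂ :=
      Set.union_subset hs₂.subE (Set.singleton_subset_iff.mpr hp₂)
    have hq₁ : gweight f Et₁ =
        gweight f (Et₁ \ (Es₁ ∪ {(vp, vr₁)})) + gweight f (Es₁ ∪ {(vp, vr₁)}) := by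
      unfold gweight
      conv_lhs => rw [← Set.diff_union_of_subset hX₁sub]
      exact finsum_mem_union Set.disjoint_sdiff_left (hfin₁.subset Set.diff_subset)
        (hfin₁.subset hX₁sub)
    have hq₂ : gweight f Et₂ =
        gweight f (Et₂ \ (Es₂ ∪ {(vp, vr₂)})) + gweight f (Es₂ ∪ {(vp, vr₂)}) := by
      unfold gweight
      conv_lhs => rw [← Set.diff_union_of_subset hX₂sub]
      exact finsum_mem_union Set.disjoint_sdiff_left (hfin₂.subset Set.diff_subset)
        (hfin₂.subset hX₂sub)
    have hq₁' : gweight f ((Et₁ \ (Es₁ ∪ {(vp, vr₁)})) ∪ (Es₂ ∪ {(vp, vr₂)})) =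
        gweight f (Et₁ \ (Es₁ ∪ {(vp, vr₁)})) + gweight f (Es₂ ∪ {(vp, vr₂)}) := by
      unfold gweight
      exact finsum_mem_union hd₁ (hfin₁.subset Set.diff_subset) (hfin₂.subset hX₂sub)
    have hq₂' : gweight f ((Et₂ \ (Es₂ ∪ {(vp, vr₂)})) ∪ (Es₁ ∪ {(vp, vr₁)})) =
        gweight f (Et₂ \ (Es₂ ∪ {(vp, vr₂)})) + gweight f (Es₁ ∪ {(vp, vr₁)}) := by
      unfold gweight
      exact finsum_mem_union hd₂ (hfin₂.subset Set.diff_subset) (hfin₁.subset hX₁sub)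
    cases vp with
    | ua => exact absurd rfl hvp
    | node ℓp Up =>
      have hvpV : HNode.node ℓp Up ∈ completeV Y :=
        history_sub_completeV h₁ (h₁.1.edge_mem _ hp₁).1
      have hCUp : cladeUnion vr₁ ∈ Up := h₁.1.edge_clade ℓp Up vr₁ hp₁
      have hs₁' : IsSubhistoryRooted (completeV Y) (completeE Y) Vs₁ Es₁ vr₁ :=
        ⟨hs₁.subV.trans (history_sub_completeV h₁), hs₁.subE.trans (history_sub_completeE h₁),
          hs₁.ua_not_mem, hs₁.edge_mem, hs₁.root_mem, hs₁.reach_root, hs₁.unique_desc⟩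
      have hs₂' : IsSubhistoryRooted (completeV Y) (completeE Y) Vs₂ Es₂ vr₂ :=
        ⟨hs₂.subV.trans (history_sub_completeV h₂), hs₂.subE.trans (history_sub_completeE h₂),
          hs₂.ua_not_mem, hs₂.edge_mem, hs₂.root_mem, hs₂.reach_root, hs₂.unique_desc⟩
      have hw₁ : gweight f (Es₁ ∪ {(HNode.node ℓp Up, vr₁)}) ∈
          augWeights f (completeV Y) (completeE Y) (HNode.node ℓp Up) (cladeUnion vr₁) := by
        refine ⟨vr₁, Vs₁, Es₁, history_sub_completeE h₁ hp₁, rfl, hs₁', ?_⟩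
        rw [Set.union_singleton]
      have hw₂ : gweight f (Es₂ ∪ {(HNode.node ℓp Up, vr₂)}) ∈
          augWeights f (completeV Y) (completeE Y) (HNode.node ℓp Up) (cladeUnion vr₁) := by
        refine ⟨vr₂, Vs₂, Es₂, history_sub_completeE h₂ hp₂, hcu, hs₂', ?_⟩
        rw [Set.union_singleton]
      have hra := (hco.2.1 ℓp Up hvpV (cladeUnion vr₁) hCUp).2
      have hiff₁ := hra _ hw₂ _ hw₁
        (gweight f (Et₁ \ (Es₁ ∪ {(HNode.node ℓp Up, vr₁)})))
      have hiff₂ := hra _ hw₂ _ hw₁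
        (gweight f (Et₂ \ (Es₂ ∪ {(HNode.node ℓp Up, vr₂)})))
      rw [hq₁', hq₁, hq₂, hq₂',
        add_comm (gweight f (Et₁ \ (Es₁ ∪ {(HNode.node ℓp Up, vr₁)}))),
        add_comm (gweight f (Et₁ \ (Es₁ ∪ {(HNode.node ℓp Up, vr₁)}))),
        add_comm (gweight f (Et₂ \ (Es₂ ∪ {(HNode.node ℓp Up, vr₂)}))),
        add_comm (gweight f (Et₂ \ (Es₂ ∪ {(HNode.node ℓp Up, vr₂)})))]
      exact hiff₁.symm.trans hiff₂

end HistorySDAGs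
end

section
/- Let t₁, …, t_n be histories in a history sDAG (V,E), and for 2 ≤ i ≤ n let sᵢ be a subhistory of tᵢ. Then, whenever each successive swap is defined (i.e., at each step a conforming subhistory exists), the history t₁ ◁ s₂ ◁ ⋯ ◁ s_n is a history in (V,E). -/
universe u v

namespace HistorySDAGs

variable {Y : Type u}

variable {W : Type v}

section SwapAux

variable {Vt : Set (HNode Y)} {Et : Set (HNode Y × HNode Y)}

lemma eq_ua_of_reach_ua (hni : ∀ v : HNode Y, (v, HNode.ua) ∉ Et) {x : HNode Y}
    (h : Reach Et x HNode.ua) : x = HNode.ua := by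
  rcases h.cases_tail with h' | ⟨c, _, hc⟩
  · exact h'.symm
  · exact absurd hc (hni c)

lemma cu_leaf (ℓ : Y) : cladeUnion (HNode.node ℓ (∅ : Set (Set Y))) = {ℓ} := by
  simp [cladeUnion]

lemma cu_node {ℓ : Y} {U : Set (Set Y)} (hU : U ≠ ∅) :
    cladeUnion (HNode.node ℓ U) = ⋃₀ U := by
  simp [cladeUnion, hU]

lemma subset_cu_of_mem {ℓ : Y} {U : Set (Set Y)} {C : Set Y} (hC : C ∈ U) :
    C ⊆ cladeUnion (HNode.node ℓ U) := by
  have hU : U ≠ ∅ := fun h => by simp [h] at hC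
  rw [cu_node hU]
  exact Set.subset_sUnion_of_mem hC

lemma cu_sub_of_edge_s15 (hs : IsHSDAG Vt Et) {p w : HNode Y} (hp : p ≠ HNode.ua)
    (he : (p, w) ∈ Et) : cladeUnion w ⊆ cladeUnion p := by
  cases p with
  | ua => exact absurd rfl hp
  | node ℓ U => exact subset_cu_of_mem (hs.edge_clade _ _ _ he)

lemma cu_mono (hs : IsHSDAG Vt Et) {x y : HNode Y} (hx : x ≠ HNode.ua)
    (h : Reach Et x y) : cladeUnion y ⊆ cladeUnion x := by
  induction h with
  | refl => exact subset_rfl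
  | tail hb hbc ih =>
    rename_i b c
    have hbne : b ≠ HNode.ua := fun hb' => hx (eq_ua_of_reach_ua hs.no_in_ua (hb' ▸ hb))
    exact (cu_sub_of_edge_s15 hs hbne hbc).trans ih

lemma edge_strict (hs : IsHSDAG Vt Et) {ℓ : Y} {U : Set (Set Y)} {b : HNode Y}
    (he : (HNode.node ℓ U, b) ∈ Et) :
    ∃ y ∈ cladeUnion (HNode.node ℓ U), y ∉ cladeUnion b := by
  have hmem := hs.edge_clade ℓ U b he
  have hpart := hs.valid ℓ U (hs.edge_mem _ he).1
  obtain ⟨C', hC', hne⟩ : ∃ C' ∈ U, C' ≠ cladeUnion b := by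
    by_contra hcon
    push_neg at hcon
    exact hpart.2.2.1 (cladeUnion b) (Set.eq_singleton_iff_unique_mem.mpr ⟨hmem, hcon⟩)
  obtain ⟨y, hy⟩ := Set.nonempty_iff_ne_empty.mpr (hpart.1 C' hC')
  exact ⟨y, subset_cu_of_mem hC' hy,
    Set.disjoint_left.mp (hpart.2.1 C' hC' (cladeUnion b) hmem hne) hy⟩

lemma no_cycle (hs : IsHSDAG Vt Et) {a b : HNode Y} (he : (a, b) ∈ Et)
    (hr : Reach Et b a) : False := by
  have hbne : b ≠ HNode.ua := fun h => hs.no_in_ua a (h ▸ he)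
  cases a with
  | ua => exact hbne (eq_ua_of_reach_ua hs.no_in_ua hr)
  | node ℓ U =>
    obtain ⟨y, hy, hyb⟩ := edge_strict hs he
    exact hyb (cu_mono hs hbne hr hy)

lemma cu_nonempty {ℓ : Y} {U : Set (Set Y)} (hp : IsPart U) :
    (cladeUnion (HNode.node ℓ U)).Nonempty := by
  by_cases hU : U = ∅
  · rw [hU, cu_leaf]; exact ⟨ℓ, rfl⟩
  · rw [cu_node hU]
    obtain ⟨C, hC⟩ := Set.nonempty_iff_ne_empty.mpr hU
    obtain ⟨y, hy⟩ := Set.nonempty_iff_ne_empty.mpr (hp.1 C hC)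
    exact ⟨y, C, hC, hy⟩

lemma cu_finite {ℓ : Y} {U : Set (Set Y)} (hp : IsPart U) :
    (cladeUnion (HNode.node ℓ U)).Finite := by
  by_cases hU : U = ∅
  · rw [hU, cu_leaf]; exact Set.finite_singleton ℓ
  · rw [cu_node hU]; exact Set.Finite.sUnion hp.2.2.2.1 hp.2.2.2.2

lemma comparable_of_reach (hs : IsHSDAG Vt Et) (hud : UniqueDesc Vt Et)
    {x a b : HNode Y} (hxa : Reach Et x a) :
    Reach Et x b → x ∈ Vt → x ≠ HNode.ua → (cladeUnion a ∩ cladeUnion b).Nonempty →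
    Reach Et a b ∨ Reach Et b a := by
  induction hxa using Relation.ReflTransGen.head_induction_on with
  | refl => intro hab _ _ _; exact Or.inl hab
  | @head x c hxc hca ih =>
    intro hxb hxV hxne hint
    rcases hxb.cases_head with rfl | ⟨c', hxc', hc'b⟩
    · exact Or.inr (hca.head hxc)
    · cases x with
      | ua => exact absurd rfl hxne
      | node ℓ U =>
        have h1 := hs.edge_clade _ _ _ hxc
        have h2 := hs.edge_clade _ _ _ hxc'
        by_cases hcc : cladeUnion c = cladeUnion c'
        · obtain ⟨w, _, huw⟩ := hud ℓ U hxV (cladeUnion c) h1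
          have hcceq : c = c' := (huw c ⟨hxc, rfl⟩).trans (huw c' ⟨hxc', hcc.symm⟩).symm
          subst hcceq
          exact ih hc'b (hs.edge_mem _ hxc).2 (fun h => hs.no_in_ua _ (h ▸ hxc)) hint
        · exfalso
          have hdis := (hs.valid ℓ U hxV).2.1 _ h1 _ h2 hcc
          have hcne : c ≠ HNode.ua := fun h => hs.no_in_ua _ (h ▸ hxc)
          have hc'ne : c' ≠ HNode.ua := fun h => hs.no_in_ua _ (h ▸ hxc')
          obtain ⟨y, hya, hyb⟩ := hint
          exact Set.disjoint_left.mp hdis (cu_mono hs hcne hca hya)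
            (cu_mono hs hc'ne hc'b hyb)

lemma comparable_nodes (hs : IsHSDAG Vt Et) (hud : UniqueDesc Vt Et)
    (huac : ∃! v, (HNode.ua, v) ∈ Et) {a b : HNode Y}
    (ha : a ∈ Vt) (hb : b ∈ Vt) (hane : a ≠ HNode.ua) (hbne : b ≠ HNode.ua)
    (hint : (cladeUnion a ∩ cladeUnion b).Nonempty) :
    Reach Et a b ∨ Reach Et b a := by
  obtain ⟨c, _, hcu⟩ := huac
  rcases (hs.reach_ua a ha).cases_head with h | ⟨c1, hc1, hc1a⟩
  · exact absurd h.symm hane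
  rcases (hs.reach_ua b hb).cases_head with h | ⟨c2, hc2, hc2b⟩
  · exact absurd h.symm hbne
  have hcb : Reach Et c1 b := by rw [hcu c1 hc1, ← hcu c2 hc2]; exact hc2b
  exact comparable_of_reach hs hud hc1a hcb (hs.edge_mem _ hc1).2
    (fun h => hs.no_in_ua _ (h ▸ hc1)) hint

lemma unique_parent (hs : IsHSDAG Vt Et) (hud : UniqueDesc Vt Et)
    (huac : ∃! v, (HNode.ua, v) ∈ Et) {p1 p2 v : HNode Y}
    (h1 : (p1, v) ∈ Et) (h2 : (p2, v) ∈ Et) : p1 = p2 := by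
  by_contra hne
  have hvne : v ≠ HNode.ua := fun h => hs.no_in_ua p1 (h ▸ h1)
  have hvV : v ∈ Vt := (hs.edge_mem _ h1).2
  have hvnon : (cladeUnion v).Nonempty := by
    cases v with
    | ua => exact absurd rfl hvne
    | node ℓ U => exact cu_nonempty (hs.valid ℓ U hvV)
  have aux : ∀ p q : HNode Y, (p, v) ∈ Et → (q, v) ∈ Et → p ≠ q → p ≠ HNode.ua →
      Reach Et p q → False := by
    intro p q hp hq hpq hpua hreach
    have hqua : q ≠ HNode.ua := fun h => hpua (eq_ua_of_reach_ua hs.no_in_ua (h ▸ hreach))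
    rcases hreach.cases_head with h | ⟨z, hpz, hzq⟩
    · exact hpq h
    cases p with
    | ua => exact absurd rfl hpua
    | node ℓ U =>
      have hz := hs.edge_clade _ _ _ hpz
      have hv := hs.edge_clade _ _ _ hp
      have hzne : z ≠ HNode.ua := fun h => hs.no_in_ua _ (h ▸ hpz)
      have hsubz : cladeUnion v ⊆ cladeUnion z :=
        (cu_sub_of_edge_s15 hs hqua hq).trans (cu_mono hs hzne hzq)
      by_cases hcc : cladeUnion z = cladeUnion v
      · obtain ⟨w, _, huw⟩ := hud ℓ U (hs.edge_mem _ hpz).1 (cladeUnion z) hz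
        have hzv : z = v := (huw z ⟨hpz, rfl⟩).trans (huw v ⟨hp, hcc.symm⟩).symm
        exact no_cycle hs hq (hzv ▸ hzq)
      · have hdis := (hs.valid ℓ U (hs.edge_mem _ hpz).1).2.1 _ hz _ hv hcc
        obtain ⟨y, hy⟩ := hvnon
        exact Set.disjoint_left.mp hdis (hsubz hy) hy
  by_cases h1u : p1 = HNode.ua
  · subst h1u
    obtain ⟨c, _, hcu⟩ := huac
    rcases (hs.reach_ua p2 (hs.edge_mem _ h2).1).cases_head with h | ⟨c2, hc2, hc2p⟩
    · exact hne h
    · have hc2v : c2 = v := (hcu c2 hc2).trans (hcu v h1).symm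
      exact no_cycle hs h2 (hc2v ▸ hc2p)
  by_cases h2u : p2 = HNode.ua
  · subst h2u
    obtain ⟨c, _, hcu⟩ := huac
    rcases (hs.reach_ua p1 (hs.edge_mem _ h1).1).cases_head with h | ⟨c1, hc1, hc1p⟩
    · exact hne h.symm
    · have hc1v : c1 = v := (hcu c1 hc1).trans (hcu v h2).symm
      exact no_cycle hs h1 (hc1v ▸ hc1p)
  · obtain ⟨y, hy⟩ := hvnon
    have hint : (cladeUnion p1 ∩ cladeUnion p2).Nonempty :=
      ⟨y, cu_sub_of_edge_s15 hs h1u h1 hy, cu_sub_of_edge_s15 hs h2u h2 hy⟩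
    rcases comparable_nodes hs hud huac (hs.edge_mem _ h1).1 (hs.edge_mem _ h2).1
      h1u h2u hint with hr | hr
    · exact aux p1 p2 h1 h2 hne h1u hr
    · exact aux p2 p1 h2 h1 (Ne.symm hne) h2u hr

variable {Vs : Set (HNode Y)} {Es : Set (HNode Y × HNode Y)} {vr : HNode Y}

lemma sub_edge_closed (hs : IsHSDAG Vt Et) (hud : UniqueDesc Vt Et)
    (hsub : IsSubhistoryRooted Vt Et Vs Es vr)
    {e : HNode Y × HNode Y} (he : e ∈ Et) (h1 : e.1 ∈ Vs) : e ∈ Es := by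
  obtain ⟨a, b⟩ := e
  cases a with
  | ua => exact absurd h1 hsub.ua_not_mem
  | node ℓ U =>
    have hcb := hs.edge_clade _ _ _ he
    obtain ⟨vc, ⟨hvcE, hvcC⟩, _⟩ := hsub.unique_desc ℓ U h1 (cladeUnion b) hcb
    obtain ⟨w, _, huw⟩ := hud ℓ U (hsub.subV h1) (cladeUnion b) hcb
    have hb : b = vc := (huw b ⟨he, rfl⟩).trans (huw vc ⟨hsub.subE hvcE, hvcC⟩).symm
    rw [show ((HNode.node ℓ U, b) : HNode Y × HNode Y) = (HNode.node ℓ U, vc) by rw [hb]]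
    exact hvcE

lemma sub_reach_closed (hs : IsHSDAG Vt Et) (hud : UniqueDesc Vt Et)
    (hsub : IsSubhistoryRooted Vt Et Vs Es vr)
    {w : HNode Y} (h : Reach Et vr w) : w ∈ Vs := by
  induction h with
  | refl => exact hsub.root_mem
  | tail hb hbc ih =>
    exact (hsub.edge_mem _ (sub_edge_closed hs hud hsub hbc ih)).2

lemma sub_parent (hs : IsHSDAG Vt Et) (hud : UniqueDesc Vt Et)
    (huac : ∃! v, (HNode.ua, v) ∈ Et) (hsub : IsSubhistoryRooted Vt Et Vs Es vr)
    {e : HNode Y × HNode Y} (he : e ∈ Et) (h2 : e.2 ∈ Vs) : e ∈ Es ∨ e.2 = vr := by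
  obtain ⟨a, b⟩ := e
  rcases (hsub.reach_root _ h2).cases_tail with h | ⟨c, _, hce⟩
  · exact Or.inr h
  · have hac : a = c := unique_parent hs hud huac he (hsub.subE hce)
    subst hac
    exact Or.inl hce

lemma sub_leaf_eq (hs : IsHSDAG Vt Et)
    (hsub : IsSubhistoryRooted Vt Et Vs Es vr) : leafLabels Vs = cladeUnion vr := by
  have hvrne : vr ≠ HNode.ua := fun h => hsub.ua_not_mem (h ▸ hsub.root_mem)
  apply Set.Subset.antisymm
  · intro ℓ hℓ
    have hreach : Reach Et vr (HNode.node ℓ ∅) :=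
      Relation.ReflTransGen.mono (fun x y hxy => hsub.subE hxy) _ _ (hsub.reach_root _ hℓ)
    exact cu_mono hs hvrne hreach (by rw [cu_leaf]; exact rfl)
  · intro y hy
    have claim : ∀ n : ℕ, ∀ v, v ∈ Vs → y ∈ cladeUnion v → (cladeUnion v).ncard ≤ n →
        HNode.node y ∅ ∈ Vs := by
      intro n
      induction n with
      | zero =>
        intro v hv hyv hcard
        cases v with
        | ua => exact absurd hv hsub.ua_not_mem
        | node ℓ U =>
          have hfin := cu_finite (ℓ := ℓ) (hs.valid ℓ U (hsub.subV hv))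
          rw [(Set.ncard_eq_zero hfin).mp (Nat.le_zero.mp hcard)] at hyv
          exact absurd hyv (Set.notMem_empty y)
      | succ n ih =>
        intro v hv hyv hcard
        cases v with
        | ua => exact absurd hv hsub.ua_not_mem
        | node ℓ U =>
          by_cases hU : U = ∅
          · subst hU
            rw [cu_leaf] at hyv
            rw [← Set.mem_singleton_iff.mp hyv] at hv
            exact hv
          · rw [cu_node hU] at hyv
            obtain ⟨C, hC, hyC⟩ := hyv
            obtain ⟨vc, ⟨hvcE, hvcC⟩, _⟩ := hsub.unique_desc ℓ U hv C hC
            have hvcVs : vc ∈ Vs := (hsub.edge_mem _ hvcE).2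
            have hfin := cu_finite (ℓ := ℓ) (hs.valid ℓ U (hsub.subV hv))
            obtain ⟨y', hy'mem, hy'not⟩ := edge_strict hs (hsub.subE hvcE)
            have hne2 : cladeUnion vc ≠ cladeUnion (HNode.node ℓ U) :=
              fun h => hy'not (h.symm ▸ hy'mem)
            have hlt := Set.ncard_lt_ncard
              (lt_of_le_of_ne
                (cu_sub_of_edge_s15 hs (fun h => by cases h) (hsub.subE hvcE)) hne2) hfin
            exact ih vc hvcVs (by rw [hvcC]; exact hyC)
              (Nat.lt_succ_iff.mp (lt_of_lt_of_le hlt hcard))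
    exact claim _ vr hsub.root_mem hy le_rfl

end SwapAux

lemma swap_step {V : Set (HNode Y)} {E : Set (HNode Y × HNode Y)}
    {t t' : Hist Y} (ht : HistoryIn V E t.1 t.2)
    (hstep : SwapStepUsing {u : Hist Y | HistoryIn V E u.1 u.2} t t') :
    HistoryIn V E t'.1 t'.2 := by
  obtain ⟨t₂, ht₂, Vs', Es', vr', vp, hsub', hpr', Vs, Es, vr, hsub, hpr, hleaf, ht'⟩ := hstep
  subst ht'
  obtain ⟨htV, htE, hs, huac, hud⟩ := ht
  obtain ⟨h2V, h2E, h2s, h2uac, h2ud⟩ := ht₂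
  show HistoryIn V E ((t.1 \ Vs) ∪ Vs')
    ((t.2 \ (Es ∪ {(vp, vr)})) ∪ (Es' ∪ {(vp, vr')}))
  set Et' := (t.2 \ (Es ∪ {(vp, vr)})) ∪ (Es' ∪ {(vp, vr')}) with hEt'def
  have hvrVs : vr ∈ Vs := hsub.root_mem
  have hvr'Vs' : vr' ∈ Vs' := hsub'.root_mem
  have hvrne : vr ≠ HNode.ua := fun h => hsub.ua_not_mem (h ▸ hvrVs)
  have hvr'ne : vr' ≠ HNode.ua := fun h => hsub'.ua_not_mem (h ▸ hvr'Vs')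
  have hvpVt : vp ∈ t.1 := (hs.edge_mem _ hpr).1
  have hvpVs : vp ∉ Vs := fun hh =>
    no_cycle hs hpr (Relation.ReflTransGen.mono (fun a b hab => hsub.subE hab) _ _ (hsub.reach_root vp hh))
  have hCU : cladeUnion vr' = cladeUnion vr := by
    rw [← sub_leaf_eq h2s hsub', ← sub_leaf_eq hs hsub]
    exact hleaf.symm
  have disj : ∀ v, v ∈ Vs' → v ∈ t.1 → v ∈ Vs := by
    intro v hv' hvV
    by_contra hvS
    have hvne : v ≠ HNode.ua := fun h => hsub'.ua_not_mem (h ▸ hv')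
    have hsubCU : cladeUnion v ⊆ cladeUnion vr :=
      hCU ▸ (cu_mono h2s hvr'ne (Relation.ReflTransGen.mono
        (fun a b hab => hsub'.subE hab) _ _ (hsub'.reach_root v hv')))
    have hvnon : (cladeUnion v).Nonempty := by
      cases v with
      | ua => exact absurd rfl hvne
      | node ℓ U => exact cu_nonempty (hs.valid ℓ U hvV)
    obtain ⟨y, hy⟩ := hvnon
    rcases comparable_nodes hs hud huac hvV (hsub.subV hvrVs) hvne hvrne
      ⟨y, hy, hsubCU hy⟩ with hr1 | hr2
    · rcases hr1.cases_head with h | ⟨z, hvz, hzvr⟩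
      · exact hvS (h.symm ▸ hvrVs)
      · cases v with
        | ua => exact absurd rfl hvne
        | node ℓ U =>
          obtain ⟨y', hy'mem, hy'not⟩ := edge_strict hs hvz
          have hzne : z ≠ HNode.ua := fun h => hs.no_in_ua _ (h ▸ hvz)
          exact hy'not (cu_mono hs hzne hzvr (hsubCU hy'mem))
    · exact hvS (sub_reach_closed hs hud hsub hr2)
  have hvpVs' : vp ∉ Vs' := fun hh => hvpVs (disj vp hh hvpVt)
  have memEt' : ∀ e : HNode Y × HNode Y,
      e ∈ Et' ↔ (e ∈ t.2 ∧ e ∉ Es ∧ e ≠ (vp, vr)) ∨ e ∈ Es' ∨ e = (vp, vr') := by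
    intro e
    rw [hEt'def]
    simp only [Set.mem_union, Set.mem_diff, Set.mem_singleton_iff]
    tauto
  have old_src : ∀ e ∈ t.2, e ∉ Es → e.1 ∉ Vs := fun e he hes h1 =>
    hes (sub_edge_closed hs hud hsub he h1)
  have old_tgt : ∀ e ∈ t.2, e ∉ Es → e ≠ (vp, vr) → e.2 ∉ Vs := by
    intro e he hes hne h2
    rcases sub_parent hs hud huac hsub he h2 with h | h
    · exact hes h
    · have h1 : e.1 = vp := unique_parent hs hud huac he (h.symm ▸ hpr)
      exact hne (Prod.ext_iff.mpr ⟨h1, h⟩)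
  have hud' : UniqueDesc ((t.1 \ Vs) ∪ Vs') Et' := by
    intro ℓ U hv C hC
    rcases hv with hv | hv
    · by_cases hvp : HNode.node ℓ U = vp
      · by_cases hCvr : C = cladeUnion vr
        · refine ⟨vr', ⟨(memEt' _).mpr (Or.inr (Or.inr (by rw [hvp]))),
            by rw [hCU, hCvr]⟩, ?_⟩
          rintro w ⟨hwE, hwC⟩
          rcases (memEt' _).mp hwE with ⟨hw2, _, hwne⟩ | hw | hw
          · exfalso
            have hUvr : cladeUnion vr ∈ U := hs.edge_clade ℓ U vr (hvp.symm ▸ hpr)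
            obtain ⟨z, _, huz⟩ := hud ℓ U hv.1 (cladeUnion vr) hUvr
            have hwvr : w = vr :=
              (huz w ⟨hw2, by rw [hwC, hCvr]⟩).trans (huz vr ⟨hvp.symm ▸ hpr, rfl⟩).symm
            exact hwne (by rw [hwvr, hvp])
          · exact absurd ((hsub'.edge_mem _ hw).1) (hvp.symm ▸ hvpVs')
          · simp only [Prod.mk.injEq] at hw
            exact hw.2
        · obtain ⟨w, ⟨hwE, hwC⟩, huw⟩ := hud ℓ U hv.1 C hC
          have hwvr : w ≠ vr := fun h => hCvr (by rw [← hwC, h])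
          refine ⟨w, ⟨(memEt' _).mpr (Or.inl ⟨hwE,
            fun hes => hv.2 ((hsub.edge_mem _ hes).1),
            fun hh => hwvr (by simpa using congrArg Prod.snd hh)⟩), hwC⟩, ?_⟩
          rintro w' ⟨hw'E, hw'C⟩
          rcases (memEt' _).mp hw'E with ⟨h2', _, _⟩ | hw' | hw'
          · exact huw w' ⟨h2', hw'C⟩
          · exact absurd (disj _ ((hsub'.edge_mem _ hw').1) hv.1) hv.2
          · exfalso
            simp only [Prod.mk.injEq] at hw'
            exact hCvr (by rw [← hw'C, hw'.2, hCU])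
      · obtain ⟨w, ⟨hwE, hwC⟩, huw⟩ := hud ℓ U hv.1 C hC
        refine ⟨w, ⟨(memEt' _).mpr (Or.inl ⟨hwE,
          fun hes => hv.2 ((hsub.edge_mem _ hes).1),
          fun hh => hvp (by simpa using congrArg Prod.fst hh)⟩), hwC⟩, ?_⟩
        rintro w' ⟨hw'E, hw'C⟩
        rcases (memEt' _).mp hw'E with ⟨h2', _, _⟩ | hw' | hw'
        · exact huw w' ⟨h2', hw'C⟩
        · exact absurd (disj _ ((hsub'.edge_mem _ hw').1) hv.1) hv.2
        · exfalso
          simp only [Prod.mk.injEq] at hw'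
          exact hvp hw'.1
    · obtain ⟨w, ⟨hwE, hwC⟩, huw⟩ := hsub'.unique_desc ℓ U hv C hC
      refine ⟨w, ⟨(memEt' _).mpr (Or.inr (Or.inl hwE)), hwC⟩, ?_⟩
      rintro w' ⟨hw'E, hw'C⟩
      rcases (memEt' _).mp hw'E with ⟨h2', hes', _⟩ | hw' | hw'
      · exact absurd (disj _ hv (hs.edge_mem _ h2').1) (old_src _ h2' hes')
      · exact huw w' ⟨hw', hw'C⟩
      · exfalso
        simp only [Prod.mk.injEq] at hw'
        exact hvpVs' (hw'.1 ▸ hv)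
  have huac' : ∃! v, (HNode.ua, v) ∈ Et' := by
    obtain ⟨c, hc, hcu⟩ := huac
    by_cases hvpua : vp = HNode.ua
    · refine ⟨vr', (memEt' _).mpr (Or.inr (Or.inr (by rw [hvpua]))), ?_⟩
      intro x hx
      rcases (memEt' _).mp hx with ⟨h2', _, hne⟩ | hx | hx
      · exfalso
        have hxvr : x = vr := (hcu x h2').trans (hcu vr (hvpua ▸ hpr)).symm
        exact hne (by rw [hxvr, hvpua])
      · exact absurd (hsub'.edge_mem _ hx).1 hsub'.ua_not_mem
      · simp only [Prod.mk.injEq] at hx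
        exact hx.2
    · refine ⟨c, (memEt' _).mpr (Or.inl ⟨hc,
        fun hes => hsub.ua_not_mem ((hsub.edge_mem _ hes).1),
        fun hh => hvpua (by simpa using (congrArg Prod.fst hh).symm)⟩), ?_⟩
      intro x hx
      rcases (memEt' _).mp hx with ⟨h2', _, _⟩ | hx | hx
      · exact hcu x h2'
      · exact absurd (hsub'.edge_mem _ hx).1 hsub'.ua_not_mem
      · exfalso
        simp only [Prod.mk.injEq] at hx
        exact hvpua hx.1.symm
  have reach_old : ∀ w, Reach t.2 HNode.ua w → w ∉ Vs → Reach Et' HNode.ua w := by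
    intro w hw
    induction hw with
    | refl => intro _; exact Relation.ReflTransGen.refl
    | tail hb hbc ih =>
      rename_i b c
      intro hc
      have hbVs : b ∉ Vs := fun hb' =>
        hc (hsub.edge_mem _ (sub_edge_closed hs hud hsub hbc hb')).2
      refine (ih hbVs).tail ((memEt' _).mpr (Or.inl ⟨hbc,
        fun hes => hc (hsub.edge_mem _ hes).2, fun hh => hc ?_⟩))
      simp only [Prod.mk.injEq] at hh
      exact hh.2.symm ▸ hvrVs
  have reach' : ∀ w ∈ (t.1 \ Vs) ∪ Vs', Reach Et' HNode.ua w := by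
    rintro w (⟨hwV, hwVs⟩ | hw)
    · exact reach_old w (hs.reach_ua w hwV) hwVs
    · have h1 : Reach Et' HNode.ua vr' :=
        (reach_old vp (hs.reach_ua vp hvpVt) hvpVs).tail
          ((memEt' _).mpr (Or.inr (Or.inr rfl)))
      exact h1.trans (Relation.ReflTransGen.mono
        (fun a b hab => (memEt' (a, b)).mpr (Or.inr (Or.inl hab))) _ _ (hsub'.reach_root w hw))
  refine ⟨?_, ?_, ?_, huac', hud'⟩
  · rintro v (⟨hv, _⟩ | hv)
    · exact htV hv
    · exact h2V (hsub'.subV hv)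
  · intro e he
    rcases (memEt' e).mp he with ⟨h2', _, _⟩ | hE | heq
    · exact htE h2'
    · exact h2E (hsub'.subE hE)
    · exact heq ▸ h2E hpr'
  · refine ⟨Or.inl ⟨hs.ua_mem, hsub.ua_not_mem⟩, ?_, ?_, reach', ?_, ?_, ?_⟩
    · rintro ℓ U (hU | hU)
      · exact hs.valid ℓ U hU.1
      · exact h2s.valid ℓ U (hsub'.subV hU)
    · intro e he
      rcases (memEt' e).mp he with ⟨h2', hes, hne⟩ | hE | heq
      · exact ⟨Or.inl ⟨(hs.edge_mem _ h2').1, old_src _ h2' hes⟩,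
          Or.inl ⟨(hs.edge_mem _ h2').2, old_tgt _ h2' hes hne⟩⟩
      · exact ⟨Or.inr (hsub'.edge_mem _ hE).1, Or.inr (hsub'.edge_mem _ hE).2⟩
      · subst heq
        exact ⟨Or.inl ⟨hvpVt, hvpVs⟩, Or.inr hvr'Vs'⟩
    · intro v hv
      rcases (memEt' _).mp hv with ⟨h2', _, _⟩ | hE | heq
      · exact hs.no_in_ua v h2'
      · exact hsub'.ua_not_mem ((hsub'.edge_mem _ hE).2)
      · simp only [Prod.mk.injEq] at heq
        exact hvr'ne heq.2.symm
    · intro ℓ U w hw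
      rcases (memEt' _).mp hw with ⟨h2', _, _⟩ | hE | heq
      · exact hs.edge_clade ℓ U w h2'
      · exact h2s.edge_clade ℓ U w (hsub'.subE hE)
      · simp only [Prod.mk.injEq] at heq
        rw [heq.2]
        exact h2s.edge_clade ℓ U vr' (heq.1 ▸ hpr')
    · intro ℓ U hU C hC
      obtain ⟨w, hw, _⟩ := hud' ℓ U hU C hC
      exact ⟨w, hw⟩

/-- Lemma `closedundertl`: the histories of a history sDAG are closed
under (iterated) subhistory swaps with subhistories of histories in the sDAG. -/
theorem histories_closed_under_swaps
    (V : Set (HNode Y)) (E : Set (HNode Y × HNode Y)) (h : IsHSDAG V E)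
    (t t' : Hist Y) (ht : HistoryIn V E t.1 t.2)
    (hsteps : Relation.ReflTransGen
      (SwapStepUsing {u : Hist Y | HistoryIn V E u.1 u.2}) t t') :
    HistoryIn V E t'.1 t'.2 := by
  induction hsteps with
  | refl => exact ht
  | tail _ hstep ih => exact swap_step ih hstep

end HistorySDAGs
end

section
/- Let (V,E) be the complete history sDAG on labels Y. Given a history (V_t,E_t) in (V,E) with ρ's unique child v, set V' = V_t∖{ρ}, E' = E_t∖{(ρ,v)}, and φ : V' → Y defined by φ((ℓ,U)) = ℓ. Then the correspondence (V_t,E_t) ↦ (V',E',φ) is a well-defined map from histories in (V,E) to internally labeled trees with labels in Y: (V',E') is a rooted tree in which no node has exactly one child, and φ restricted to leaf nodes is injective. -/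
universe u v

namespace HistorySDAGs

variable {Y : Type u}

variable {W : Type v}

lemma cu_finite_s17 {V : Set (HNode Y)} {E : Set (HNode Y × HNode Y)}
    (hsd : IsHSDAG V E) {v : HNode Y} (hv : v ∈ V) : (cladeUnion v).Finite := by
  cases v with
  | ua => simp [cladeUnion]
  | node ℓ U =>
    obtain ⟨-, -, -, hUfin, hCfin⟩ := hsd.valid ℓ U hv
    by_cases hU : U = ∅
    · simp [cladeUnion, hU]
    · simpa [cladeUnion, hU] using Set.Finite.sUnion hUfin hCfin

lemma cu_ssubset {V : Set (HNode Y)} {E : Set (HNode Y × HNode Y)}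
    (hsd : IsHSDAG V E) {u v : HNode Y}
    (he : (u, v) ∈ E) (hu : u ≠ HNode.ua) :
    cladeUnion v ⊂ cladeUnion u := by
  obtain ⟨hum, hvm⟩ := hsd.edge_mem _ he
  cases u with
  | ua => exact absurd rfl hu
  | node ℓ U =>
    have hC : cladeUnion v ∈ U := hsd.edge_clade ℓ U v he
    obtain ⟨hne, hdisj, hnsing, -, -⟩ := hsd.valid ℓ U hum
    have hUne : U ≠ ∅ := by rintro rfl; exact hC
    have hcu : cladeUnion (HNode.node ℓ U) = ⋃₀ U := by simp [cladeUnion, hUne]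
    rw [hcu]
    constructor
    · exact Set.subset_sUnion_of_mem hC
    · intro hsub
      obtain ⟨C', hC', hCC'⟩ : ∃ C' ∈ U, C' ≠ cladeUnion v := by
        by_contra h
        push_neg at h
        exact hnsing (cladeUnion v) (Set.eq_singleton_iff_unique_mem.mpr ⟨hC, h⟩)
      obtain ⟨y, hy⟩ := Set.nonempty_iff_ne_empty.mpr (hne C' hC')
      have hyv : y ∈ cladeUnion v := hsub (Set.mem_sUnion.mpr ⟨C', hC', hy⟩)
      exact Set.disjoint_left.mp (hdisj C' hC' (cladeUnion v) hC hCC') hy hyv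


/-- Lemma `correspondence_c_to_h`: dropping the UA node (and its unique
outgoing edge) from a history yields a rooted tree with no unifurcations whose labeling is
injective on leaves. -/
theorem history_to_labeled_tree
    (Vt : Set (HNode Y)) (Et : Set (HNode Y × HNode Y))
    (hin : HistoryIn (completeV Y) (completeE Y) Vt Et)
    (r : HNode Y) (hr : (HNode.ua, r) ∈ Et)
    (V' : Set (HNode Y)) (hV' : V' = Vt \ {HNode.ua})
    (E' : Set (HNode Y × HNode Y)) (hE' : E' = Et \ {(HNode.ua, r)}) :
    (r ∈ V' ∧ ∀ x ∈ V', GReach E' r x) ∧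
    (∀ x a b : HNode Y, (a, x) ∈ E' → (b, x) ∈ E' → a = b) ∧
    (∀ a : HNode Y, (a, r) ∉ E') ∧
    (∀ x : HNode Y, ¬ Relation.TransGen (fun a b => (a, b) ∈ E') x x) ∧
    (∀ x ∈ V', ¬ (∃! c, (x, c) ∈ E')) ∧
    (∀ ℓ U₁ U₂, HNode.node ℓ U₁ ∈ V' → HNode.node ℓ U₂ ∈ V' →
      IsLeafIn V' E' (HNode.node ℓ U₁) → IsLeafIn V' E' (HNode.node ℓ U₂) → U₁ = U₂) := by
  obtain ⟨hVsub, hEsub, hsd, hua, hud⟩ := hin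
  subst hV' hE'
  set V' : Set (HNode Y) := Vt \ {HNode.ua} with hV'
  set E' : Set (HNode Y × HNode Y) := Et \ {(HNode.ua, r)} with hE'
  have hchild : ∀ v, (HNode.ua, v) ∈ Et → v = r := by
    obtain ⟨v0, -, hv0⟩ := hua
    exact fun v hv => (hv0 v hv).trans (hv0 r hr).symm
  have hEsubEt : E' ⊆ Et := Set.diff_subset
  have h_src_ne_ua : ∀ a b : HNode Y, (a, b) ∈ E' → a ≠ HNode.ua := by
    rintro a b ⟨het, hne⟩ rfl
    exact hne (by simp [hchild b het])
  have hEmem : ∀ a b : HNode Y, (a, b) ∈ E' → a ∈ Vt ∧ b ∈ Vt :=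
    fun a b h => hsd.edge_mem _ (hEsubEt h)
  have hss : ∀ a b : HNode Y, (a, b) ∈ E' → cladeUnion b ⊂ cladeUnion a :=
    fun a b h => cu_ssubset hsd (hEsubEt h) (h_src_ne_ua a b h)
  have hstrict : ∀ a b : HNode Y, (a, b) ∈ E' →
      (cladeUnion b).ncard < (cladeUnion a).ncard := by
    intro a b h
    exact Set.ncard_lt_ncard (hss a b h) (cu_finite_s17 hsd (hEmem a b h).1)
  have hsubCU : ∀ a b : HNode Y, GReach E' a b → cladeUnion b ⊆ cladeUnion a := by
    intro a b h
    induction h with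
    | refl => exact subset_rfl
    | tail _ he ih => exact (hss _ _ he).subset.trans ih
  have hmono : ∀ a b : HNode Y, GReach E' a b →
      (cladeUnion b).ncard ≤ (cladeUnion a).ncard := by
    intro a b h
    induction h with
    | refl => exact le_rfl
    | tail _ he ih => exact le_trans (le_of_lt (hstrict _ _ he)) ih
  have hrne : r ≠ HNode.ua := by
    rintro rfl; exact hsd.no_in_ua _ hr
  have hrV' : r ∈ V' := ⟨(hsd.edge_mem _ hr).2, by simpa using hrne⟩
  have hkey : ∀ x : HNode Y, Reach Et HNode.ua x → x ≠ HNode.ua → GReach E' r x := by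
    intro x h0
    induction h0 with
    | refl => exact fun h => absurd rfl h
    | @tail b c hreach he ih =>
      intro _
      by_cases hb : b = HNode.ua
      · subst hb
        rw [hchild c he]
        exact Relation.ReflTransGen.refl
      · exact Relation.ReflTransGen.tail (ih hb)
          ⟨he, fun hmem => hb (congrArg Prod.fst (Set.mem_singleton_iff.mp hmem))⟩
  have hreach : ∀ x ∈ V', GReach E' r x := by
    rintro x ⟨hxV, hxua⟩
    exact hkey x (hsd.reach_ua x hxV) (by simpa using hxua)
  -- x below an edge has nonempty clade union
  have hxne : ∀ a x : HNode Y, (a, x) ∈ E' → (cladeUnion x).Nonempty := by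
    intro a x h
    obtain ⟨haV, -⟩ := hEmem a x h
    cases a with
    | ua => exact absurd rfl (h_src_ne_ua _ _ h)
    | node ℓ U =>
      have hC : cladeUnion x ∈ U := hsd.edge_clade ℓ U x (hEsubEt h)
      exact Set.nonempty_iff_ne_empty.mpr ((hsd.valid ℓ U haV).1 _ hC)
  -- distinct children of the same node have disjoint clade unions
  have hsib : ∀ w c₁ c₂ : HNode Y, (w, c₁) ∈ E' → (w, c₂) ∈ E' → c₁ ≠ c₂ →
      Disjoint (cladeUnion c₁) (cladeUnion c₂) := by
    intro w c₁ c₂ h₁ h₂ hne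
    obtain ⟨hwV, -⟩ := hEmem w c₁ h₁
    cases w with
    | ua => exact absurd rfl (h_src_ne_ua _ _ h₁)
    | node ℓ U =>
      have hC₁ : cladeUnion c₁ ∈ U := hsd.edge_clade ℓ U c₁ (hEsubEt h₁)
      have hC₂ : cladeUnion c₂ ∈ U := hsd.edge_clade ℓ U c₂ (hEsubEt h₂)
      by_cases hcc : cladeUnion c₁ = cladeUnion c₂
      · exfalso
        obtain ⟨vc, -, huc⟩ := hud ℓ U hwV (cladeUnion c₁) hC₁
        exact hne ((huc c₁ ⟨hEsubEt h₁, rfl⟩).trans (huc c₂ ⟨hEsubEt h₂, hcc.symm⟩).symm)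
      · exact (hsd.valid ℓ U hwV).2.1 _ hC₁ _ hC₂ hcc
  -- main uniqueness-of-parent claim
  have main : ∀ n : ℕ, ∀ u a b x : HNode Y, (cladeUnion u).ncard ≤ n →
      GReach E' u a → GReach E' u b → (a, x) ∈ E' → (b, x) ∈ E' → a = b := by
    intro n
    induction n using Nat.strong_induction_on with
    | _ n IH =>
      intro u a b x hcard hua' hub' hax hbx
      by_cases hab : a = b
      · exact hab
      exfalso
      rcases hua'.cases_head with h | ⟨c₁, huc₁, hc₁a⟩
      · -- u = a
        have hub2 : GReach E' a b := h ▸ hub'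
        rcases hub2.cases_head with h2 | ⟨c, hac, hcb⟩
        · exact hab h2
        · by_cases hcx : c = x
          · have h1 : cladeUnion x ⊂ cladeUnion b := hss b x hbx
            have h2' : cladeUnion b ⊆ cladeUnion x := hsubCU x b (hcx ▸ hcb)
            exact h1.not_subset h2'
          · have hdisj := hsib a c x hac hax hcx
            have h1 : cladeUnion x ⊆ cladeUnion c :=
              (hss b x hbx).subset.trans (hsubCU c b hcb)
            obtain ⟨y, hy⟩ := hxne b x hbx
            exact Set.disjoint_left.mp hdisj (h1 hy) hy
      rcases hub'.cases_head with h | ⟨c₂, huc₂, hc₂b⟩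
      · -- u = b
        have hux : (u, x) ∈ E' := by rw [h]; exact hbx
        by_cases hcx : c₁ = x
        · have h1 : cladeUnion x ⊂ cladeUnion a := hss a x hax
          have h2 : cladeUnion a ⊆ cladeUnion x := hsubCU x a (hcx ▸ hc₁a)
          exact h1.not_subset h2
        · have hdisj := hsib u c₁ x huc₁ hux hcx
          have h1 : cladeUnion x ⊆ cladeUnion c₁ :=
            (hss a x hax).subset.trans (hsubCU c₁ a hc₁a)
          obtain ⟨y, hy⟩ := hxne a x hax
          exact Set.disjoint_left.mp hdisj (h1 hy) hy
      by_cases hc : c₁ = c₂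
      · subst hc
        have hlt : (cladeUnion c₁).ncard < n := lt_of_lt_of_le (hstrict u c₁ huc₁) hcard
        exact hab (IH _ hlt c₁ a b x le_rfl hc₁a hc₂b hax hbx)
      · have hdisj := hsib u c₁ c₂ huc₁ huc₂ hc
        have h1 : cladeUnion x ⊆ cladeUnion c₁ :=
          (hss a x hax).subset.trans (hsubCU c₁ a hc₁a)
        have h2 : cladeUnion x ⊆ cladeUnion c₂ :=
          (hss b x hbx).subset.trans (hsubCU c₂ b hc₂b)
        obtain ⟨y, hy⟩ := hxne a x hax
        exact Set.disjoint_left.mp hdisj (h1 hy) (h2 hy)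
  refine ⟨⟨hrV', hreach⟩, ?_, ?_, ?_, ?_, ?_⟩
  · -- unique parent
    intro x a b hax hbx
    have haV' : a ∈ V' := ⟨(hEmem a x hax).1, by simpa using h_src_ne_ua a x hax⟩
    have hbV' : b ∈ V' := ⟨(hEmem b x hbx).1, by simpa using h_src_ne_ua b x hbx⟩
    exact main (cladeUnion r).ncard r a b x le_rfl (hreach a haV') (hreach b hbV') hax hbx
  · -- no parent of root
    intro a har
    have haV' : a ∈ V' := ⟨(hEmem a r har).1, by simpa using h_src_ne_ua a r har⟩
    have h1 := hstrict a r har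
    have h2 := hmono r a (hreach a haV')
    omega
  · -- acyclic
    intro x hx
    obtain ⟨y, hxy, hyx⟩ := Relation.TransGen.head'_iff.mp hx
    have h1 := hstrict x y hxy
    have h2 := hmono y x hyx
    omega
  · -- no unifurcations
    rintro x ⟨hxV, hxua⟩ ⟨c, hc, hcuniq⟩
    have hxua : x ≠ HNode.ua := by simpa using hxua
    cases x with
    | ua => exact hxua rfl
    | node ℓ U =>
      have hC : cladeUnion c ∈ U := hsd.edge_clade ℓ U c (hEsubEt hc)
      obtain ⟨-, -, hnsing, -, -⟩ := hsd.valid ℓ U hxV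
      obtain ⟨C', hC', hCC'⟩ : ∃ C' ∈ U, C' ≠ cladeUnion c := by
        by_contra h
        push_neg at h
        exact hnsing (cladeUnion c) (Set.eq_singleton_iff_unique_mem.mpr ⟨hC, h⟩)
      obtain ⟨c', hc', hcu'⟩ := hsd.clade_cov ℓ U hxV C' hC'
      have hc'E : (HNode.node ℓ U, c') ∈ E' :=
        ⟨hc', by simp [Prod.ext_iff]⟩
      exact hCC' (hcu' ▸ congrArg cladeUnion (hcuniq c' hc'E))
  · -- leaves have empty subpartition, hence equal
    intro ℓ U₁ U₂ h₁ h₂ hl₁ hl₂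
    have key : ∀ U, HNode.node ℓ U ∈ V' → IsLeafIn V' E' (HNode.node ℓ U) → U = ∅ := by
      rintro U ⟨hUV, -⟩ ⟨-, hnoc⟩
      by_contra hU
      obtain ⟨C, hC⟩ := Set.nonempty_iff_ne_empty.mpr hU
      obtain ⟨c, hcE, -⟩ := hsd.clade_cov ℓ U hUV C hC
      exact hnoc c ⟨hcE, by simp [Prod.ext_iff]⟩
    rw [key U₁ h₁ hl₁, key U₂ h₂ hl₂]

end HistorySDAGs
end

section
/- Let (V,E) be the complete history sDAG on labels Y and let t = (τ,φ) be an internally labeled tree with labels in Y and root node w₀. For each node w of τ, let C_w ⊆ Y be the set of leaf labels below w, and set v_w = (φ(w), {C_{w'} : w' a child of w}). Define V_t = {v_w : w a node of t} ∪ {ρ} and E_t = {(v_{w₁},v_{w₂}) : (w₁,w₂) an edge of t} ∪ {(ρ,v_{w₀})}. Then the correspondence t ↦ (V_t,E_t) is a well-defined map from internally labeled trees with labels in Y to histories in (V,E): w ↦ v_w is a well-defined injection, the induced map on edges is a well-defined injection, and (V_t,E_t) is a history in (V,E). -/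
universe u v

namespace HistorySDAGs

variable {Y : Type u}

variable {W : Type v}

section TreeAux

variable {α : Type v} {nodes : Set α} {edges : Set (α × α)} {root : α} {lab : α → Y}

lemma leaf_greach_eq {u v : α} (hu : ∀ c, (u, c) ∉ edges) (h : GReach edges u v) : v = u := by
  rcases Relation.ReflTransGen.cases_head h with h | ⟨c, hc, _⟩
  · exact h.symm
  · exact absurd hc (hu c)

lemma no_back (hac : ∀ x, ¬ Relation.TransGen (fun a b => (a, b) ∈ edges) x x)
    {w c : α} (hwc : (w, c) ∈ edges) (h : GReach edges c w) : False :=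
  hac w (Relation.TransGen.head' hwc h)

lemma exists_leaf_below (ht : IsLabeledTree nodes edges root lab) :
    ∀ x ∈ nodes, ∃ u, IsLeafIn nodes edges u ∧ GReach edges x u := by
  have main : ∀ n : ℕ, ∀ x ∈ nodes, ({v ∈ nodes | GReach edges x v}).ncard ≤ n →
      ∃ u, IsLeafIn nodes edges u ∧ GReach edges x u := by
    intro n
    induction n with
    | zero =>
      intro x hx hcard
      exfalso
      have hfin : ({v ∈ nodes | GReach edges x v}).Finite :=
        ht.finite.subset (fun v hv => hv.1)
      have hmem : x ∈ {v ∈ nodes | GReach edges x v} := ⟨hx, Relation.ReflTransGen.refl⟩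
      have := (Set.ncard_pos hfin).mpr ⟨x, hmem⟩
      omega
    | succ n ih =>
      intro x hx hcard
      by_cases hleaf : ∀ c, (x, c) ∉ edges
      · exact ⟨x, ⟨hx, hleaf⟩, Relation.ReflTransGen.refl⟩
      · push_neg at hleaf
        obtain ⟨c, hc⟩ := hleaf
        have hcn : c ∈ nodes := (ht.edge_mem _ hc).2
        have hfin : ({v ∈ nodes | GReach edges x v}).Finite :=
          ht.finite.subset (fun v hv => hv.1)
        have hss : {v ∈ nodes | GReach edges c v} ⊂ {v ∈ nodes | GReach edges x v} := by
          rw [Set.ssubset_def]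
          constructor
          · rintro v ⟨hv1, hv2⟩
            exact ⟨hv1, (Relation.ReflTransGen.single hc).trans hv2⟩
          · intro hsub
            exact no_back ht.acyclic hc (hsub ⟨hx, Relation.ReflTransGen.refl⟩).2
        have hlt := Set.ncard_lt_ncard hss hfin
        obtain ⟨u, hu, hru⟩ := ih c hcn (by omega)
        exact ⟨u, hu, (Relation.ReflTransGen.single hc).trans hru⟩
  intro x hx
  exact main _ x hx le_rfl

lemma reach_comparable (hup : ∀ x a b, (a, x) ∈ edges → (b, x) ∈ edges → a = b)
    {a b u : α} (hau : GReach edges a u) :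
    GReach edges b u → GReach edges a b ∨ GReach edges b a := by
  induction hau with
  | refl => exact fun hbu => Or.inr hbu
  | @tail p u hap hpu ih =>
    intro hbu
    rcases Relation.ReflTransGen.cases_tail hbu with h | ⟨q, hbq, hqu⟩
    · subst h
      exact Or.inl (hap.tail hpu)
    · exact ih (by rwa [hup u q p hqu hpu] at hbq)

lemma children_no_common (ht : IsLabeledTree nodes edges root lab) {w c₁ c₂ u : α}
    (h1 : (w, c₁) ∈ edges) (h2 : (w, c₂) ∈ edges) (hne : c₁ ≠ c₂)
    (r1 : GReach edges c₁ u) (r2 : GReach edges c₂ u) : False := by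
  have key : ∀ a b : α, (w, a) ∈ edges → (w, b) ∈ edges → a ≠ b → GReach edges a b → False := by
    intro a b ha hb hab hr
    rcases Relation.ReflTransGen.cases_tail hr with h' | ⟨q, hq, hqc⟩
    · exact hab h'.symm
    · have hqw : q = w := ht.unique_parent b q w hqc hb
      exact no_back ht.acyclic ha (hqw ▸ hq)
  rcases reach_comparable ht.unique_parent r1 r2 with h | h
  · exact key c₁ c₂ h1 h2 hne h
  · exact key c₂ c₁ h2 h1 hne.symm h

lemma leavesBelow_nonempty (ht : IsLabeledTree nodes edges root lab) {x : α} (hx : x ∈ nodes) :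
    (leavesBelow nodes edges lab x).Nonempty := by
  obtain ⟨u, hu, hr⟩ := exists_leaf_below ht x hx
  exact ⟨lab u, u, hu, hr, rfl⟩

lemma leavesBelow_subset : leavesBelow nodes edges lab x ⊆ lab '' nodes := by
  rintro y ⟨u, hu, _, rfl⟩
  exact ⟨u, hu.1, rfl⟩

lemma leavesBelow_mono {x c : α} (hc : (x, c) ∈ edges) :
    leavesBelow nodes edges lab c ⊆ leavesBelow nodes edges lab x := by
  rintro y ⟨u, hu, hr, rfl⟩
  exact ⟨u, hu, (Relation.ReflTransGen.single hc).trans hr, rfl⟩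

lemma leaf_mem_leavesBelow_iff (ht : IsLabeledTree nodes edges root lab) {x u : α}
    (hu : IsLeafIn nodes edges u) :
    lab u ∈ leavesBelow nodes edges lab x ↔ GReach edges x u := by
  constructor
  · rintro ⟨u', hu', hr, hl⟩
    rwa [ht.leaf_inj u' u hu' hu hl.symm] at hr
  · intro h; exact ⟨u, hu, h, rfl⟩

lemma exists_other_child (ht : IsLabeledTree nodes edges root lab) {x c : α}
    (hx : x ∈ nodes) (hc : (x, c) ∈ edges) : ∃ c', (x, c') ∈ edges ∧ c' ≠ c := by
  by_contra h
  push_neg at h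
  exact ht.no_unif x hx ⟨c, hc, fun c' hc' => h c' hc'⟩

lemma leavesBelow_injOn (ht : IsLabeledTree nodes edges root lab) :
    Set.InjOn (leavesBelow nodes edges lab) nodes := by
  have key : ∀ x ∈ nodes, ∀ y : α,
      leavesBelow nodes edges lab x ⊆ leavesBelow nodes edges lab y →
      GReach edges x y → x ≠ y → False := by
    intro x hx y hsub hxy hne
    rcases Relation.ReflTransGen.cases_head hxy with h | ⟨c₁, hc₁, hcy⟩
    · exact hne h
    obtain ⟨c₂, hc₂, hne₂⟩ := exists_other_child ht hx hc₁
    obtain ⟨u, hu, hru⟩ := exists_leaf_below ht c₂ ((ht.edge_mem _ hc₂).2)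
    have h1 : lab u ∈ leavesBelow nodes edges lab x :=
      ⟨u, hu, (Relation.ReflTransGen.single hc₂).trans hru, rfl⟩
    have h2 : GReach edges y u := (leaf_mem_leavesBelow_iff ht hu).mp (hsub h1)
    exact children_no_common ht hc₁ hc₂ (Ne.symm hne₂) (hcy.trans h2) hru
  intro x hx y hy h
  by_contra hne
  obtain ⟨u, hu, hru⟩ := exists_leaf_below ht x hx
  have h1 : lab u ∈ leavesBelow nodes edges lab x := ⟨u, hu, hru, rfl⟩
  rw [h] at h1
  have h2 : GReach edges y u := (leaf_mem_leavesBelow_iff ht hu).mp h1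
  rcases reach_comparable ht.unique_parent hru h2 with hc | hc
  · exact key x hx y h.subset hc hne
  · exact key y hy x h.symm.subset hc (Ne.symm hne)

lemma childClades_eq_empty_iff {w : α} :
    {C | ∃ w', (w, w') ∈ edges ∧ C = leavesBelow nodes edges lab w'} = ∅ ↔
      ∀ c, (w, c) ∉ edges := by
  constructor
  · intro h c hc
    have : leavesBelow nodes edges lab c ∈
        {C | ∃ w', (w, w') ∈ edges ∧ C = leavesBelow nodes edges lab w'} := ⟨c, hc, rfl⟩
    rw [h] at this
    exact this
  · intro h
    ext C
    simp only [Set.mem_setOf_eq, Set.mem_empty_iff_false, iff_false]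
    rintro ⟨c, hc, -⟩
    exact h c hc

lemma cladeUnion_treeNodeOf (ht : IsLabeledTree nodes edges root lab) {w : α} (hw : w ∈ nodes) :
    cladeUnion (treeNodeOf nodes edges lab w) = leavesBelow nodes edges lab w := by
  by_cases hch : ∀ c, (w, c) ∉ edges
  · rw [treeNodeOf, cladeUnion, if_pos (childClades_eq_empty_iff.mpr hch)]
    ext y
    simp only [Set.mem_singleton_iff]
    constructor
    · rintro rfl
      exact ⟨w, ⟨hw, hch⟩, Relation.ReflTransGen.refl, rfl⟩
    · rintro ⟨u, hu, hr, rfl⟩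
      exact congrArg lab (leaf_greach_eq hch hr)
  · push_neg at hch
    rw [treeNodeOf, cladeUnion, if_neg (fun h => by
      rw [childClades_eq_empty_iff] at h
      obtain ⟨c, hc⟩ := hch
      exact h c hc)]
    ext y
    simp only [Set.mem_sUnion, Set.mem_setOf_eq]
    constructor
    · rintro ⟨C, ⟨c, hc, rfl⟩, hy⟩
      exact leavesBelow_mono hc hy
    · rintro ⟨u, hu, hr, rfl⟩
      rcases Relation.ReflTransGen.cases_head hr with h | ⟨c, hc, hcu⟩
      · subst h
        obtain ⟨c, hc⟩ := hch
        exact absurd hc (hu.2 c)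
      · exact ⟨leavesBelow nodes edges lab c, ⟨c, hc, rfl⟩, ⟨u, hu, hcu, rfl⟩⟩

lemma treeNodeOf_injOn (ht : IsLabeledTree nodes edges root lab) :
    Set.InjOn (treeNodeOf nodes edges lab) nodes := by
  intro x hx y hy h
  apply leavesBelow_injOn ht hx hy
  rw [← cladeUnion_treeNodeOf ht hx, ← cladeUnion_treeNodeOf ht hy, h]

lemma isPart_treeNodeOf (ht : IsLabeledTree nodes edges root lab) {w : α} (hw : w ∈ nodes) :
    IsPart {C | ∃ w', (w, w') ∈ edges ∧ C = leavesBelow nodes edges lab w'} := by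
  refine ⟨?_, ?_, ?_, ?_, ?_⟩
  · rintro C ⟨c, hc, rfl⟩
    exact (leavesBelow_nonempty ht ((ht.edge_mem _ hc).2)).ne_empty
  · rintro C₁ ⟨c₁, hc₁, rfl⟩ C₂ ⟨c₂, hc₂, rfl⟩ hne
    have hcc : c₁ ≠ c₂ := fun h => hne (by rw [h])
    rw [Set.disjoint_left]
    rintro y ⟨u₁, hu₁, hr₁, rfl⟩ ⟨u₂, hu₂, hr₂, hl⟩
    have hu12 : u₂ = u₁ := ht.leaf_inj u₂ u₁ hu₂ hu₁ hl.symm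
    subst hu12
    exact children_no_common ht hc₁ hc₂ hcc hr₁ hr₂
  · intro C hC
    have hCmem : C ∈ ({C} : Set (Set Y)) := rfl
    rw [← hC] at hCmem
    obtain ⟨c₁, hc₁, hCe⟩ := hCmem
    obtain ⟨c₂, hc₂, hne₂⟩ := exists_other_child ht hw hc₁
    have h2 : leavesBelow nodes edges lab c₂ ∈
        {C' | ∃ w', (w, w') ∈ edges ∧ C' = leavesBelow nodes edges lab w'} := ⟨c₂, hc₂, rfl⟩
    rw [hC, Set.mem_singleton_iff, hCe] at h2
    exact hne₂ (leavesBelow_injOn ht (ht.edge_mem _ hc₂).2 (ht.edge_mem _ hc₁).2 h2)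
  · apply Set.Finite.subset (ht.finite.image (leavesBelow nodes edges lab))
    rintro C ⟨c, hc, rfl⟩
    exact ⟨c, (ht.edge_mem _ hc).2, rfl⟩
  · rintro C ⟨c, hc, rfl⟩
    exact (ht.finite.image lab).subset leavesBelow_subset

end TreeAux

/-- Lemma `correspondence_h_to_c`: the map sending an internally
labeled tree to its history is well-defined: `w ↦ v_w` is injective, the induced map on
edges is injective, and the resulting pair is a history in the complete history sDAG. -/
theorem labeled_tree_to_history {α : Type v}
    (nodes : Set α) (edges : Set (α × α)) (root : α) (lab : α → Y)
    (ht : IsLabeledTree nodes edges root lab) :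
    Set.InjOn (treeNodeOf nodes edges lab) nodes ∧
    (∀ e₁ ∈ edges, ∀ e₂ ∈ edges,
      (treeNodeOf nodes edges lab e₁.1, treeNodeOf nodes edges lab e₁.2) =
        (treeNodeOf nodes edges lab e₂.1, treeNodeOf nodes edges lab e₂.2) → e₁ = e₂) ∧
    HistoryIn (completeV Y) (completeE Y)
      (treeToHistV nodes edges lab) (treeToHistE nodes edges root lab) := by
  have hinj := treeNodeOf_injOn ht
  set τ := treeNodeOf nodes edges lab with hτ
  -- basic facts
  have hne_ua : ∀ w : α, τ w ≠ HNode.ua := by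
    intro w h
    rw [hτ, treeNodeOf] at h
    cases h
  -- decompose node-membership in Vt
  have memV : ∀ ℓ U, HNode.node ℓ U ∈ treeToHistV nodes edges lab →
      ∃ w ∈ nodes, τ w = HNode.node ℓ U := by
    intro ℓ U h
    rcases h with h | ⟨w, hw, hweq⟩
    · exact absurd h (fun hh => by cases hh)
    · exact ⟨w, hw, hweq⟩
  refine ⟨hinj, ?_, ?_, ?_, ?_⟩
  · -- edge injectivity
    intro e₁ he₁ e₂ he₂ h
    have h1 : τ e₁.1 = τ e₂.1 := congrArg Prod.fst h
    have h2 : τ e₁.2 = τ e₂.2 := congrArg Prod.snd h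
    have := hinj (ht.edge_mem _ he₁).1 (ht.edge_mem _ he₂).1 h1
    have := hinj (ht.edge_mem _ he₁).2 (ht.edge_mem _ he₂).2 h2
    exact Prod.ext ‹e₁.1 = e₂.1› ‹e₁.2 = e₂.2›
  · -- Vt ⊆ completeV
    rintro v (rfl | ⟨w, hw, rfl⟩)
    · exact Or.inl rfl
    · exact Or.inr ⟨lab w, _, rfl, isPart_treeNodeOf ht hw⟩
  · -- Et ⊆ completeE
    rintro e (rfl | ⟨w₁, w₂, hw, rfl⟩)
    · exact ⟨Or.inl rfl, Or.inr ⟨_, _, rfl, isPart_treeNodeOf ht ht.root_mem⟩,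
        hne_ua root, Or.inl rfl⟩
    · have h1 := (ht.edge_mem _ hw).1
      have h2 := (ht.edge_mem _ hw).2
      refine ⟨Or.inr ⟨_, _, rfl, isPart_treeNodeOf ht h1⟩,
        Or.inr ⟨_, _, rfl, isPart_treeNodeOf ht h2⟩, hne_ua w₂,
        Or.inr ⟨lab w₁, _, rfl, ?_⟩⟩
      rw [show (treeNodeOf nodes edges lab w₁, treeNodeOf nodes edges lab w₂).2 =
        τ w₂ from rfl, cladeUnion_treeNodeOf ht h2]
      exact ⟨w₂, hw, rfl⟩
  · -- IsHistory
    have edge_mem_Vt : ∀ e ∈ treeToHistE nodes edges root lab,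
        e.1 ∈ treeToHistV nodes edges lab ∧ e.2 ∈ treeToHistV nodes edges lab := by
      rintro e (rfl | ⟨w₁, w₂, hw, rfl⟩)
      · exact ⟨Or.inl rfl, Or.inr ⟨root, ht.root_mem, rfl⟩⟩
      · exact ⟨Or.inr ⟨w₁, (ht.edge_mem _ hw).1, rfl⟩, Or.inr ⟨w₂, (ht.edge_mem _ hw).2, rfl⟩⟩
    -- edges between tree nodes map into Et
    have tree_edge_mem : ∀ w₁ w₂ : α, (w₁, w₂) ∈ edges →
        (τ w₁, τ w₂) ∈ treeToHistE nodes edges root lab := by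
      intro w₁ w₂ hw
      exact Set.mem_insert_iff.mpr (Or.inr ⟨w₁, w₂, hw, rfl⟩)
    -- uniqueness of descendant edges
    have uniq : ∀ ℓ U, HNode.node ℓ U ∈ treeToHistV nodes edges lab → ∀ C ∈ U,
        ∃! vc, (HNode.node ℓ U, vc) ∈ treeToHistE nodes edges root lab ∧
          cladeUnion vc = C := by
      intro ℓ U hmem C hC
      obtain ⟨w, hw, hweq⟩ := memV ℓ U hmem
      have hUeq : U = {C | ∃ w', (w, w') ∈ edges ∧ C = leavesBelow nodes edges lab w'} := by
        rw [hτ, treeNodeOf] at hweq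
        injection hweq with _ h
        exact h.symm
      rw [hUeq] at hC
      obtain ⟨w', hw', rfl⟩ := hC
      have hw'n : w' ∈ nodes := (ht.edge_mem _ hw').2
      refine ⟨τ w', ⟨hweq ▸ tree_edge_mem w w' hw', cladeUnion_treeNodeOf ht hw'n⟩, ?_⟩
      rintro vc ⟨hvc, hcu⟩
      rcases hvc with h | ⟨w₁, w₂, hw12, heq⟩
      · exact absurd (congrArg Prod.fst h) (fun hh => by cases hh)
      · have hvceq : vc = τ w₂ := congrArg Prod.snd heq
        have hw₂n : w₂ ∈ nodes := (ht.edge_mem _ hw12).2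
        rw [hvceq, cladeUnion_treeNodeOf ht hw₂n] at hcu
        rw [hvceq, leavesBelow_injOn ht hw₂n hw'n hcu]
    refine ⟨⟨?_, ?_, edge_mem_Vt, ?_, ?_, ?_, ?_⟩, ?_, ?_⟩
    · exact Or.inl rfl
    · -- valid
      intro ℓ U hmem
      obtain ⟨w, hw, hweq⟩ := memV ℓ U hmem
      rw [hτ, treeNodeOf] at hweq
      injection hweq with _ h
      rw [← h]
      exact isPart_treeNodeOf ht hw
    · -- reach_ua
      have reach_map : ∀ w : α, GReach edges root w →
          Reach (treeToHistE nodes edges root lab) (τ root) (τ w) := by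
        intro w h
        induction h with
        | refl => exact Relation.ReflTransGen.refl
        | @tail p q hrp hpq ih => exact ih.tail (tree_edge_mem p q hpq)
      have hua : (HNode.ua, τ root) ∈ treeToHistE nodes edges root lab :=
        Set.mem_insert_iff.mpr (Or.inl rfl)
      rintro v (rfl | ⟨w, hw, rfl⟩)
      · exact Relation.ReflTransGen.refl
      · exact Relation.ReflTransGen.head hua (reach_map w (ht.reach_root w hw))
    · -- no_in_ua
      rintro v (h | ⟨w₁, w₂, hw, heq⟩)
      · exact hne_ua root (congrArg Prod.snd h).symm
      · exact hne_ua w₂ (congrArg Prod.snd heq).symm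
    · -- edge_clade
      rintro ℓ U v (h | ⟨w₁, w₂, hw, heq⟩)
      · exact absurd (congrArg Prod.fst h) (fun hh => by cases hh)
      · have h1 : HNode.node ℓ U = τ w₁ := congrArg Prod.fst heq
        have h2 : v = τ w₂ := congrArg Prod.snd heq
        have hUeq : {C | ∃ w', (w₁, w') ∈ edges ∧ C = leavesBelow nodes edges lab w'} = U := by
          rw [hτ, treeNodeOf] at h1
          simp only [HNode.node.injEq] at h1
          exact h1.2.symm
        rw [h2, cladeUnion_treeNodeOf ht (ht.edge_mem _ hw).2, ← hUeq]
        exact ⟨w₂, hw, rfl⟩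
    · -- clade_cov
      intro ℓ U hmem C hC
      obtain ⟨vc, hvc, _⟩ := uniq ℓ U hmem C hC
      exact ⟨vc, hvc.1, hvc.2⟩
    · -- unique UA child
      refine ⟨τ root, Set.mem_insert_iff.mpr (Or.inl rfl), ?_⟩
      rintro v (h | ⟨w₁, w₂, hw, heq⟩)
      · exact congrArg Prod.snd h
      · exact absurd (congrArg Prod.fst heq) (fun hh => by cases hh)
    · exact uniq


end HistorySDAGs
end
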